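/- arXiv:2302.01734 — 9 statements merged into one kernel-verified Lean document; each statement's English description precedes it below -/
import Mathlib

section
/- Let d ≥ 1 be an integer, L ≥ 0, and let f : ℝ^d → ℝ be L-smooth. Let θ, u, g ∈ ℝ^d with u ≠ 0, let γ > 0, and set θ⁺ = θ + γ·u/‖u‖. Then −f(θ⁺) ≤ −f(θ) − (γ/3)·‖∇f(θ)‖ + (8γ/3)·‖u − g‖ + (L·γ²)/2 + (4γ/3)·‖g − ∇f(θ)‖. -/
open InnerProductSpace

-- descent lemma
theorem descent
    {E : Type*} [NormedAddCommGroup E] [InnerProductSpace ℝ E] [CompleteSpace E]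
    (L : ℝ) (hL : 0 ≤ L)
    (f : E → ℝ) (hdiff : Differentiable ℝ f)
    (hlip : ∀ x y, ‖gradient f x - gradient f y‖ ≤ L * ‖x - y‖)
    (x δ : E) :
    f x + ⟪gradient f x, δ⟫_ℝ - L / 2 * ‖δ‖ ^ 2 ≤ f (x + δ) := by
  set c : ℝ := ⟪gradient f x, δ⟫_ℝ with hc
  set F : ℝ → ℝ := fun t => f (x + t • δ) - t * c + L * ‖δ‖ ^ 2 / 2 * t ^ 2 with hF
  have hline : ∀ t : ℝ, HasDerivAt (fun s : ℝ => x + s • δ) δ t := by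
    intro t
    simpa using ((hasDerivAt_id t).smul_const δ).const_add x
  have hder : ∀ t : ℝ, HasDerivAt F
      (⟪gradient f (x + t • δ), δ⟫_ℝ - c + L * ‖δ‖ ^ 2 * t) t := by
    intro t
    have h1 : HasDerivAt (fun s : ℝ => f (x + s • δ)) ⟪gradient f (x + t • δ), δ⟫_ℝ t := by
      have := (hdiff (x + t • δ)).hasFDerivAt.comp_hasDerivAt t (hline t)
      rw [gradient, InnerProductSpace.toDual_symm_apply]
      exact this
    have h2 : HasDerivAt (fun s : ℝ => s * c) c t := by
      simpa using (hasDerivAt_id t).mul_const c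
    have h3 : HasDerivAt (fun s : ℝ => L * ‖δ‖ ^ 2 / 2 * s ^ 2) (L * ‖δ‖ ^ 2 * t) t := by
      have := (hasDerivAt_pow 2 t).const_mul (L * ‖δ‖ ^ 2 / 2)
      convert this using 1
      · rfl
      · rfl
      · norm_num
        ring
    exact (h1.sub h2).add h3
  have hmono : MonotoneOn F (Set.Icc (0:ℝ) 1) := by
    apply monotoneOn_of_deriv_nonneg (convex_Icc 0 1)
    · have : Continuous F := by
        have : Continuous fun t : ℝ => f (x + t • δ) := hdiff.continuous.comp (by fun_prop)
        rw [hF]; exact (this.sub (by fun_prop)).add (by fun_prop)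
      exact this.continuousOn
    · intro t ht
      exact ((hder t).differentiableAt).differentiableWithinAt
    · intro t ht
      rw [(hder t).deriv]
      have ht0 : 0 ≤ t := (Set.mem_Ioo.mp (by simpa using ht)).1.le
      have := hlip (x + t • δ) x
      have hdist : ‖(x + t • δ) - x‖ = t * ‖δ‖ := by
        simp [norm_smul, abs_of_nonneg ht0]
      have hbound : ‖gradient f (x + t • δ) - gradient f x‖ ≤ L * (t * ‖δ‖) := by
        rw [← hdist]; exact this
      have hin : -(L * (t * ‖δ‖) * ‖δ‖) ≤ ⟪gradient f (x + t • δ) - gradient f x, δ⟫_ℝ := by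
        have := abs_real_inner_le_norm (gradient f (x + t • δ) - gradient f x) δ
        nlinarith [norm_nonneg δ, abs_nonneg (⟪gradient f (x + t • δ) - gradient f x, δ⟫_ℝ),
          neg_abs_le (⟪gradient f (x + t • δ) - gradient f x, δ⟫_ℝ)]
      have hsub : ⟪gradient f (x + t • δ) - gradient f x, δ⟫_ℝ
          = ⟪gradient f (x + t • δ), δ⟫_ℝ - c := by
        simp [inner_sub_left, hc]
      nlinarith [norm_nonneg δ]
  have h01 := hmono (Set.left_mem_Icc.mpr zero_le_one) (Set.right_mem_Icc.mpr zero_le_one) zero_le_one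
  simp only [hF] at h01
  simp only [zero_smul, add_zero, one_smul] at h01
  nlinarith [h01]

theorem inner_bound
    {E : Type*} [NormedAddCommGroup E] [InnerProductSpace ℝ E]
    (v u g : E) (hu : u ≠ 0) :
    ‖v‖ / 3 - 8 / 3 * ‖u - g‖ - 4 / 3 * ‖g - v‖ ≤ ⟪v, u⟫_ℝ / ‖u‖ := by
  have hun : (0:ℝ) < ‖u‖ := norm_pos_iff.mpr hu
  set a := ‖u - g‖ with ha
  set b := ‖g - v‖ with hb
  have ha0 : 0 ≤ a := norm_nonneg _
  have hb0 : 0 ≤ b := norm_nonneg _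
  rcases le_or_gt ‖v‖ b with hcase | hcase
  · -- Cauchy-Schwarz: ⟪v,u⟫ ≥ -‖v‖‖u‖
    have hcs : -(‖v‖ * ‖u‖) ≤ ⟪v, u⟫_ℝ := neg_le_of_abs_le (abs_real_inner_le_norm v u)
    have : -‖v‖ ≤ ⟪v, u⟫_ℝ / ‖u‖ := by
      rw [le_div_iff₀ hun]; linarith
    linarith
  · -- ⟪v,u⟫ = ‖u‖² - ⟪u-v,u⟫ ≥ ‖u‖² - ‖u-v‖‖u‖
    have h1 : ⟪v, u⟫_ℝ = ‖u‖ ^ 2 - ⟪u - v, u⟫_ℝ := by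
      simp [inner_sub_left, real_inner_self_eq_norm_sq]
    have h2 : ⟪u - v, u⟫_ℝ ≤ ‖u - v‖ * ‖u‖ := real_inner_le_norm _ _
    have h3 : (‖u‖ - ‖u - v‖) * ‖u‖ ≤ ⟪v, u⟫_ℝ := by nlinarith
    have h4 : ‖u‖ - ‖u - v‖ ≤ ⟪v, u⟫_ℝ / ‖u‖ := by
      rw [le_div_iff₀ hun]; linarith
    have h5 : ‖v‖ ≤ ‖u‖ + ‖u - v‖ := by
      calc ‖v‖ = ‖u - (u - v)‖ := by rw [sub_sub_cancel]
        _ ≤ ‖u‖ + ‖u - v‖ := norm_sub_le _ _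
    have h6 : ‖u - v‖ ≤ a + b := by
      calc ‖u - v‖ = ‖(u - g) + (g - v)‖ := by rw [sub_add_sub_cancel]
        _ ≤ a + b := norm_add_le _ _
    linarith

/-- one-step ascent-like inequality for a normalized update.
If `f : ℝ^d → ℝ` is `L`-smooth (differentiable with `L`-Lipschitz gradient), `u ≠ 0`,
`γ > 0` and `θ⁺ = θ + γ • u / ‖u‖`, then
`-f(θ⁺) ≤ -f(θ) - (γ/3)‖∇f(θ)‖ + (8γ/3)‖u - g‖ + Lγ²/2 + (4γ/3)‖g - ∇f(θ)‖`. -/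
theorem stmt_0
    (d : ℕ) (hd : 1 ≤ d) (L : ℝ) (hL : 0 ≤ L)
    (f : EuclideanSpace ℝ (Fin d) → ℝ)
    (hdiff : Differentiable ℝ f)
    (hlip : ∀ x y, ‖gradient f x - gradient f y‖ ≤ L * ‖x - y‖)
    (θ u g : EuclideanSpace ℝ (Fin d)) (hu : u ≠ 0)
    (γ : ℝ) (hγ : 0 < γ) :
    -f (θ + (γ / ‖u‖) • u) ≤
      -f θ - (γ / 3) * ‖gradient f θ‖ + (8 * γ / 3) * ‖u - g‖
        + L * γ ^ 2 / 2 + (4 * γ / 3) * ‖g - gradient f θ‖ := by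
  set v := gradient f θ with hv
  set δ : EuclideanSpace ℝ (Fin d) := (γ / ‖u‖) • u with hδ
  have hun : (0:ℝ) < ‖u‖ := norm_pos_iff.mpr hu
  have hnδ : ‖δ‖ = γ := by
    rw [hδ, norm_smul, Real.norm_eq_abs, abs_div, abs_of_pos hγ, abs_of_pos hun,
      div_mul_cancel₀ _ hun.ne']
  have hdes := descent L hL f hdiff hlip θ δ
  rw [hnδ] at hdes
  have hinner : ⟪v, δ⟫_ℝ = γ * (⟪v, u⟫_ℝ / ‖u‖) := by
    rw [hδ, real_inner_smul_right]; ring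
  have hib := inner_bound v u g hu
  have : γ * (‖v‖ / 3 - 8 / 3 * ‖u - g‖ - 4 / 3 * ‖g - v‖) ≤ ⟪v, δ⟫_ℝ := by
    rw [hinner]
    exact mul_le_mul_of_nonneg_left hib hγ.le
  nlinarith [hdes]
end

section
/- Let d ≥ 1 be an integer, L ≥ 0, μ > 0, ε′ ≥ 0. Let f : ℝ^d → ℝ be L-smooth, bounded above with f* = sup f, and satisfy the (μ, ε′)-relaxed weak gradient domination condition. Let θ, u, g ∈ ℝ^d with u ≠ 0, let γ > 0, and set θ⁺ = θ + γ·u/‖u‖. Then f* − f(θ⁺) ≤ (1 − √(2μ)·γ/3)·(f* − f(θ)) + (8γ/3)·‖u − g‖ + (L·γ²)/2 + (ε′·γ)/3 + (4γ/3)·‖g − ∇f(θ)‖. -/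
open InnerProductSpace

local notation "⟪" x ", " y "⟫" => @inner ℝ _ _ x y

lemma my_descent {d : ℕ} {L : ℝ} (hL : 0 ≤ L) {f : EuclideanSpace ℝ (Fin d) → ℝ}
    (hdiff : Differentiable ℝ f)
    (hlip : ∀ x y, ‖gradient f x - gradient f y‖ ≤ L * ‖x - y‖)
    (x v : EuclideanSpace ℝ (Fin d)) :
    f x + ⟪gradient f x, v⟫ - L / 2 * ‖v‖ ^ 2 ≤ f (x + v) := by
  set c : ℝ := ⟪gradient f x, v⟫ with hc
  set ψ : ℝ → ℝ := fun t => f (x + t • v) - t * c + L * ‖v‖ ^ 2 / 2 * t ^ 2 with hψdef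
  have hline : ∀ t : ℝ, HasDerivAt (fun t : ℝ => x + t • v) v t := by
    intro t
    simpa using ((hasDerivAt_id t).smul_const v).const_add x
  have hcomp : ∀ t : ℝ, HasDerivAt (fun t : ℝ => f (x + t • v))
      ⟪gradient f (x + t • v), v⟫ t := by
    intro t
    have h1 := (hasGradientAt_iff_hasFDerivAt.mp
      (hdiff (x + t • v)).hasGradientAt).comp_hasDerivAt t (hline t)
    simpa [Function.comp_def] using h1
  have hψ : ∀ t : ℝ, HasDerivAt ψ
      (⟪gradient f (x + t • v), v⟫ - c + L * ‖v‖ ^ 2 * t) t := by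
    intro t
    have h2 := ((hcomp t).sub (hasDerivAt_mul_const c)).add
      (((hasDerivAt_pow 2 t)).const_mul (L * ‖v‖ ^ 2 / 2))
    convert h2 using 1
    · rfl
    · rfl
    · rfl
    · ring
  have hmono : MonotoneOn ψ (Set.Icc (0:ℝ) 1) := by
    apply monotoneOn_of_deriv_nonneg (convex_Icc 0 1)
    · exact fun t _ => (hψ t).continuousAt.continuousWithinAt
    · exact fun t _ => ((hψ t).differentiableAt).differentiableWithinAt
    · intro t ht
      rw [interior_Icc] at ht
      rw [(hψ t).deriv]
      have hdiffb : ‖gradient f (x + t • v) - gradient f x‖ ≤ L * (t * ‖v‖) := by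
        have := hlip (x + t • v) x
        simpa [norm_smul, abs_of_pos ht.1] using this
      have hinner : |⟪gradient f (x + t • v) - gradient f x, v⟫| ≤ L * (t * ‖v‖) * ‖v‖ :=
        (abs_real_inner_le_norm _ _).trans (by
          exact mul_le_mul_of_nonneg_right hdiffb (norm_nonneg v))
      have hsub : ⟪gradient f (x + t • v) - gradient f x, v⟫ =
          ⟪gradient f (x + t • v), v⟫ - c := by
        rw [inner_sub_left]
      rw [abs_le] at hinner
      nlinarith [hinner.1]
  have h01 := hmono (Set.mem_Icc.mpr ⟨le_refl 0, zero_le_one⟩)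
    (Set.mem_Icc.mpr ⟨zero_le_one, le_refl 1⟩) zero_le_one
  simp only [hψdef] at h01
  norm_num at h01
  linarith

/-- one-step contraction under relaxed weak gradient domination, normalized
update. If `f` is `L`-smooth, bounded above with supremum `fstar`, satisfies the
`(μ, ε')`-relaxed weak gradient domination condition, `u ≠ 0`, `γ > 0` and
`θ⁺ = θ + γ • u / ‖u‖`, then
`fstar - f(θ⁺) ≤ (1 - √(2μ)γ/3)(fstar - f(θ)) + (8γ/3)‖u - g‖ + Lγ²/2 + ε'γ/3
  + (4γ/3)‖g - ∇f(θ)‖`. -/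

theorem stmt_2
    (d : ℕ) (hd : 1 ≤ d) (L : ℝ) (hL : 0 ≤ L) (μ : ℝ) (hμ : 0 < μ)
    (ε' : ℝ) (hε' : 0 ≤ ε')
    (f : EuclideanSpace ℝ (Fin d) → ℝ)
    (hdiff : Differentiable ℝ f)
    (hlip : ∀ x y, ‖gradient f x - gradient f y‖ ≤ L * ‖x - y‖)
    (fstar : ℝ) (hfstar : IsLUB (Set.range f) fstar)
    (hgd : ∀ x, ε' + ‖gradient f x‖ ≥ Real.sqrt (2 * μ) * (fstar - f x))
    (θ u g : EuclideanSpace ℝ (Fin d)) (hu : u ≠ 0)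
    (γ : ℝ) (hγ : 0 < γ) :
    fstar - f (θ + (γ / ‖u‖) • u) ≤
      (1 - Real.sqrt (2 * μ) * γ / 3) * (fstar - f θ) + (8 * γ / 3) * ‖u - g‖
        + L * γ ^ 2 / 2 + ε' * γ / 3 + (4 * γ / 3) * ‖g - gradient f θ‖ := by
  have hN : (0:ℝ) < ‖u‖ := norm_pos_iff.mpr hu
  set w : EuclideanSpace ℝ (Fin d) := gradient f θ with hw
  set v : EuclideanSpace ℝ (Fin d) := (γ / ‖u‖) • u with hv
  have hnv : ‖v‖ = γ := by
    rw [hv, norm_smul, Real.norm_eq_abs, abs_of_pos (div_pos hγ hN)]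
    field_simp
  -- descent
  have hdesc := my_descent hL hdiff hlip θ v
  rw [hnv] at hdesc
  -- inner product lower bound
  set a := ‖u - g‖ with ha
  set b := ‖g - w‖ with hb
  have ha0 : 0 ≤ a := norm_nonneg _
  have hb0 : 0 ≤ b := norm_nonneg _
  have hE : ‖u - w‖ ≤ a + b := by
    calc ‖u - w‖ = ‖(u - g) + (g - w)‖ := by abel_nf
    _ ≤ a + b := norm_add_le _ _
  have hP1 : ‖u‖ ^ 2 - ‖u - w‖ * ‖u‖ ≤ ⟪w, u⟫ := by
    have h1 : ⟪w, u⟫ = ⟪u, u⟫ - ⟪u - w, u⟫ := by rw [inner_sub_left]; ring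
    have h2 : ⟪u - w, u⟫ ≤ ‖u - w‖ * ‖u‖ := real_inner_le_norm _ _
    have h3 : ⟪u, u⟫ = ‖u‖ ^ 2 := real_inner_self_eq_norm_sq u
    linarith
  have hP2 : -(‖w‖ * ‖u‖) ≤ ⟪w, u⟫ := by
    have := abs_real_inner_le_norm w u
    rw [abs_le] at this
    linarith [this.1]
  have hWE : ‖w‖ - ‖u - w‖ ≤ ‖u‖ := by
    have h : ‖u - (u - w)‖ ≤ ‖u‖ + ‖u - w‖ := norm_sub_le _ _
    have h2 : u - (u - w) = w := by abel
    rw [h2] at h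
    linarith
  -- P ≥ ‖w‖‖u‖/3 - (4/3)(a+b)‖u‖
  have hkey : (‖w‖ / 3 - 4 / 3 * (a + b)) * ‖u‖ ≤ ⟪w, u⟫ := by
    nlinarith [mul_le_mul_of_nonneg_right hE hN.le, sq_nonneg (‖u‖ - ‖w‖ + ‖u - w‖),
      mul_le_mul_of_nonneg_right hWE hN.le]
  have hinnerv : γ * ‖w‖ / 3 - 4 * γ / 3 * (a + b) ≤ ⟪w, v⟫ := by
    rw [hv, real_inner_smul_right]
    have := mul_le_mul_of_nonneg_left hkey (le_of_lt (div_pos hγ hN))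
    calc γ * ‖w‖ / 3 - 4 * γ / 3 * (a + b)
        = γ / ‖u‖ * ((‖w‖ / 3 - 4 / 3 * (a + b)) * ‖u‖) := by field_simp
      _ ≤ _ := this
  -- gradient domination
  have hgdθ := hgd θ
  -- combine
  have := hdesc
  nlinarith [mul_le_mul_of_nonneg_left hgdθ (le_of_lt (by positivity : (0:ℝ) < γ / 3))]
end

section
/- Let d ≥ 1 be an integer, L > 0, μ > 0, ε′ ≥ 0. Let f : ℝ^d → ℝ be L-smooth, bounded above with f* = sup f, and satisfy the (μ, ε′)-relaxed weak gradient domination condition. Let θ, u, g ∈ ℝ^d, let 0 < γ ≤ 1/(2L), and set θ⁺ = θ + γ·u. Then −f(θ⁺) ≤ −f(θ) − (μ·γ/2)·(f* − f(θ))² + γ·‖u − g‖² − (1/(4γ))·‖θ⁺ − θ‖² + ((ε′)²·γ)/2 + γ·‖∇f(θ) − g‖². -/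
set_option maxHeartbeats 1000000

open InnerProductSpace

local notation "⟪" x ", " y "⟫" => @inner ℝ _ _ x y

/-- descent lemma -/
lemma descent_lemma {d : ℕ} {L : ℝ} (hL : 0 ≤ L)
    {f : EuclideanSpace ℝ (Fin d) → ℝ}
    (hdiff : Differentiable ℝ f)
    (hlip : ∀ x y, ‖gradient f x - gradient f y‖ ≤ L * ‖x - y‖)
    (θ v : EuclideanSpace ℝ (Fin d)) :
    f θ + ⟪gradient f θ, v⟫ - L / 2 * ‖v‖ ^ 2 ≤ f (θ + v) := by
  set φ : ℝ → ℝ := fun t => f (θ + t • v) - t * ⟪gradient f θ, v⟫ + L / 2 * t ^ 2 * ‖v‖ ^ 2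
    with hφ
  have hder : ∀ t : ℝ, HasDerivAt φ
      (⟪gradient f (θ + t • v), v⟫ - ⟪gradient f θ, v⟫ + L * t * ‖v‖ ^ 2) t := by
    intro t
    have hc : HasDerivAt (fun t : ℝ => θ + t • v) v t := by
      simpa using ((hasDerivAt_id t).smul_const v).const_add θ
    have hfd : HasFDerivAt f (toDual ℝ _ (gradient f (θ + t • v))) (θ + t • v) :=
      (hdiff (θ + t • v)).hasGradientAt.hasFDerivAt
    have h1 : HasDerivAt (fun t : ℝ => f (θ + t • v)) ⟪gradient f (θ + t • v), v⟫ t := by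
      exact hfd.comp_hasDerivAt t hc
    have h2 : HasDerivAt (fun t : ℝ => t * ⟪gradient f θ, v⟫) ⟪gradient f θ, v⟫ t := by
      simpa using (hasDerivAt_id t).mul_const ⟪gradient f θ, v⟫
    have h3 : HasDerivAt (fun t : ℝ => L / 2 * t ^ 2 * ‖v‖ ^ 2) (L * t * ‖v‖ ^ 2) t := by
      have := ((hasDerivAt_pow 2 t).const_mul (L / 2)).mul_const (‖v‖ ^ 2)
      refine this.congr_deriv ?_
      ring
    exact (h1.sub h2).add h3
  have hmono : MonotoneOn φ (Set.Icc (0 : ℝ) 1) := by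
    apply monotoneOn_of_deriv_nonneg (convex_Icc 0 1)
    · exact fun t _ => (hder t).continuousAt.continuousWithinAt
    · exact fun t _ => ((hder t).differentiableAt).differentiableWithinAt
    · intro t ht
      rw [interior_Icc] at ht
      rw [(hder t).deriv]
      have hin : ⟪gradient f θ - gradient f (θ + t • v), v⟫
          ≤ ‖gradient f θ - gradient f (θ + t • v)‖ * ‖v‖ := real_inner_le_norm _ _
      have hl : ‖gradient f θ - gradient f (θ + t • v)‖ ≤ L * (t * ‖v‖) := by
        have := hlip θ (θ + t • v)
        simpa [norm_smul, abs_of_nonneg ht.1.le, mul_assoc] using this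
      have hsub : ⟪gradient f θ - gradient f (θ + t • v), v⟫
          = ⟪gradient f θ, v⟫ - ⟪gradient f (θ + t • v), v⟫ := inner_sub_left _ _ _
      nlinarith [norm_nonneg v, ht.1.le, mul_le_mul_of_nonneg_right hl (norm_nonneg v)]
  have := hmono (Set.left_mem_Icc.2 zero_le_one) (Set.right_mem_Icc.2 zero_le_one) zero_le_one
  simp only [hφ, zero_smul, add_zero, one_smul, zero_mul, sub_zero, one_pow, mul_one] at this
  nlinarith [this]

/-- one-step descent-type inequality for unnormalized updates under relaxed
weak gradient domination. If `f` is `L`-smooth, bounded above with supremum `fstar`,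
satisfies the `(μ, ε')`-relaxed weak gradient domination condition, `0 < γ ≤ 1/(2L)` and
`θ⁺ = θ + γ • u`, then
`-f(θ⁺) ≤ -f(θ) - (μγ/2)(fstar - f(θ))² + γ‖u - g‖² - (1/(4γ))‖θ⁺ - θ‖² + ε'²γ/2
  + γ‖∇f(θ) - g‖²`. -/
theorem stmt_3
    (d : ℕ) (hd : 1 ≤ d) (L : ℝ) (hL : 0 < L) (μ : ℝ) (hμ : 0 < μ)
    (ε' : ℝ) (hε' : 0 ≤ ε')
    (f : EuclideanSpace ℝ (Fin d) → ℝ)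
    (hdiff : Differentiable ℝ f)
    (hlip : ∀ x y, ‖gradient f x - gradient f y‖ ≤ L * ‖x - y‖)
    (fstar : ℝ) (hfstar : IsLUB (Set.range f) fstar)
    (hgd : ∀ x, ε' + ‖gradient f x‖ ≥ Real.sqrt (2 * μ) * (fstar - f x))
    (θ u g : EuclideanSpace ℝ (Fin d))
    (γ : ℝ) (hγ : 0 < γ) (hγL : γ ≤ 1 / (2 * L)) :
    -f (θ + γ • u) ≤
      -f θ - (μ * γ / 2) * (fstar - f θ) ^ 2 + γ * ‖u - g‖ ^ 2
        - (1 / (4 * γ)) * ‖(θ + γ • u) - θ‖ ^ 2 + ε' ^ 2 * γ / 2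
        + γ * ‖gradient f θ - g‖ ^ 2 := by
  set G := gradient f θ with hG
  -- descent lemma
  have hdesc := descent_lemma hL.le hdiff hlip θ (γ • u)
  have hnormv : ‖γ • u‖ = γ * ‖u‖ := by
    rw [norm_smul, Real.norm_eq_abs, abs_of_pos hγ]
  have hinner : ⟪G, γ • u⟫ = γ * ⟪G, u⟫ := real_inner_smul_right _ _ _
  have hLγ : L * γ ≤ 1 / 2 := by
    rw [le_div_iff₀ (by positivity : (0:ℝ) < 2 * L)] at hγL
    linarith
  -- gradient domination consequence
  have hfle : f θ ≤ fstar := hfstar.1 (Set.mem_range_self θ)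
  have hgd' : μ * (fstar - f θ) ^ 2 ≤ ε' ^ 2 + ‖G‖ ^ 2 := by
    have h := hgd θ
    have hs : Real.sqrt (2 * μ) ^ 2 = 2 * μ := Real.sq_sqrt (by positivity)
    have hmul : (Real.sqrt (2 * μ) * (fstar - f θ)) ^ 2 ≤ (ε' + ‖G‖) ^ 2 := by
      apply sq_le_sq'
      · nlinarith [Real.sqrt_nonneg (2 * μ), hfle, norm_nonneg G, hε']
      · exact h
    nlinarith [hs, hmul, sq_nonneg (ε' - ‖G‖)]
  -- norm expansions
  have h1 : ‖u - G‖ ^ 2 ≤ 2 * ‖u - g‖ ^ 2 + 2 * ‖G - g‖ ^ 2 := by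
    have : u - G = (u - g) - (G - g) := by abel
    rw [this]
    have h := norm_sub_le (u - g) (G - g)
    have hsq : ‖u - g - (G - g)‖ ^ 2 ≤ (‖u - g‖ + ‖G - g‖) ^ 2 := by
      nlinarith [norm_nonneg (u - g - (G - g)), norm_nonneg (u-g), norm_nonneg (G-g)]
    nlinarith [hsq, sq_nonneg (‖u - g‖ - ‖G - g‖)]
  have h2 : ‖u - G‖ ^ 2 = ‖u‖ ^ 2 - 2 * ⟪G, u⟫ + ‖G‖ ^ 2 := by
    rw [norm_sub_sq_real, real_inner_comm u G]
  have h3 : ‖(θ + γ • u) - θ‖ ^ 2 = γ ^ 2 * ‖u‖ ^ 2 := by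
    have : (θ + γ • u) - θ = γ • u := by abel
    rw [this, hnormv]
    ring
  rw [h3]
  simp only [← hG] at hdesc
  rw [hinner, hnormv] at hdesc
  have hfourγ : 1 / (4 * γ) * (γ ^ 2 * ‖u‖ ^ 2) = γ / 4 * ‖u‖ ^ 2 := by
    field_simp
  rw [hfourγ]
  have hcore : -⟪G, u⟫ + (1:ℝ)/2 * ‖u‖ ^ 2 ≤
      -(μ / 2) * (fstar - f θ) ^ 2 + ‖u - g‖ ^ 2 + ε' ^ 2 / 2 + ‖G - g‖ ^ 2 := by
    linarith [h1, h2, hgd']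
  have hLb : L / 2 * (γ * ‖u‖) ^ 2 ≤ γ / 4 * ‖u‖ ^ 2 := by
    nlinarith [hLγ, sq_nonneg ‖u‖, hγ.le]
  have hmul := mul_le_mul_of_nonneg_left hcore hγ.le
  linarith [hdesc, hLb, hmul]
end

section
/- Let a > 0 and let τ ≥ 2 be an integer. Define α_t = 2/(a·(t+τ)) for integers t ≥ 0 (so that a·α_t ≤ 1 for all t ≥ 0). Let (r_t)_{t≥0} and (β_t)_{t≥0} be sequences of nonnegative real numbers satisfying r_{t+1} ≤ (1 − a·α_t)·r_t + β_t for all t ≥ 0. Then for all integers T ≥ t₀ ≥ 1: r_T ≤ (t₀ + τ − 1)²·r_{t₀}/(T + τ − 1)² + (Σ_{t=0}^{T−1} β_t·(t + τ)²)/(T + τ − 1)². -/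
open Finset

/-- auxiliary recursion lemma. Let `a > 0`, `τ ≥ 2` an integer,
`α_t = 2/(a(t+τ))`, and let nonnegative sequences `r, β` satisfy
`r_{t+1} ≤ (1 - a α_t) r_t + β_t`. Then for all integers `T ≥ t₀ ≥ 1`,
`r_T ≤ (t₀+τ-1)² r_{t₀} / (T+τ-1)² + (∑_{t=0}^{T-1} β_t (t+τ)²) / (T+τ-1)²`. -/
theorem stmt_4 (a : ℝ) (ha : 0 < a) (τ : ℕ) (hτ : 2 ≤ τ)
    (r β : ℕ → ℝ) (hr : ∀ t, 0 ≤ r t) (hβ : ∀ t, 0 ≤ β t)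
    (hrec : ∀ t : ℕ, r (t + 1) ≤ (1 - a * (2 / (a * ((t : ℝ) + τ)))) * r t + β t)
    (t₀ T : ℕ) (ht₀ : 1 ≤ t₀) (hT : t₀ ≤ T) :
    r T ≤ ((t₀ : ℝ) + τ - 1) ^ 2 * r t₀ / ((T : ℝ) + τ - 1) ^ 2
      + (∑ t ∈ range T, β t * ((t : ℝ) + τ) ^ 2) / ((T : ℝ) + τ - 1) ^ 2 := by
  have hτ2 : (2 : ℝ) ≤ (τ : ℝ) := by exact_mod_cast hτ
  have key : ∀ t : ℕ, ((t : ℝ) + 1 + τ - 1) ^ 2 * r (t + 1)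
      ≤ ((t : ℝ) + τ - 1) ^ 2 * r t + β t * ((t : ℝ) + τ) ^ 2 := by
    intro t
    have htτ : (0 : ℝ) < (t : ℝ) + τ := by positivity
    have hrec' : r (t + 1) ≤ ((t : ℝ) + τ - 2) / ((t : ℝ) + τ) * r t + β t := by
      have : a * (2 / (a * ((t : ℝ) + τ))) = 2 / ((t : ℝ) + τ) := by
        field_simp
      have h := hrec t
      rw [this] at h
      have : (1 - 2 / ((t : ℝ) + τ)) = ((t : ℝ) + τ - 2) / ((t : ℝ) + τ) := by
        field_simp
      rwa [this] at h
    have h1 : ((t : ℝ) + 1 + τ - 1) ^ 2 * r (t + 1)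
        ≤ ((t : ℝ) + τ) ^ 2 * (((t : ℝ) + τ - 2) / ((t : ℝ) + τ) * r t + β t) := by
      have : ((t : ℝ) + 1 + τ - 1) = ((t : ℝ) + τ) := by ring
      rw [this]
      exact mul_le_mul_of_nonneg_left hrec' (by positivity)
    refine h1.trans ?_
    have h2 : ((t : ℝ) + τ) ^ 2 * (((t : ℝ) + τ - 2) / ((t : ℝ) + τ) * r t + β t)
        = (((t : ℝ) + τ - 2) * ((t : ℝ) + τ)) * r t + β t * ((t : ℝ) + τ) ^ 2 := by
      field_simp
    rw [h2]
    have h3 : ((t : ℝ) + τ - 2) * ((t : ℝ) + τ) ≤ ((t : ℝ) + τ - 1) ^ 2 := by nlinarith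
    have := mul_le_mul_of_nonneg_right h3 (hr t)
    linarith
  have main : ∀ T : ℕ, t₀ ≤ T → ((T : ℝ) + τ - 1) ^ 2 * r T
      ≤ ((t₀ : ℝ) + τ - 1) ^ 2 * r t₀ + ∑ t ∈ range T, β t * ((t : ℝ) + τ) ^ 2 := by
    intro T hT
    induction T, hT using Nat.le_induction with
    | base =>
      have : (0 : ℝ) ≤ ∑ t ∈ range t₀, β t * ((t : ℝ) + τ) ^ 2 :=
        Finset.sum_nonneg fun t _ => mul_nonneg (hβ t) (by positivity)
      linarith
    | succ n hn ih =>
      have hk := key n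
      rw [Finset.sum_range_succ]
      push_cast
      push_cast at hk ih
      linarith
  have hpos : (0 : ℝ) < ((T : ℝ) + τ - 1) ^ 2 := by
    have : (1 : ℝ) ≤ (T : ℝ) + τ - 1 := by
      have : (2 : ℝ) ≤ (T : ℝ) + τ := by
        have : (0 : ℝ) ≤ (T : ℝ) := Nat.cast_nonneg T
        linarith
      linarith
    nlinarith
  have := main T hT
  rw [← add_div, le_div_iff₀ hpos]
  linarith [this, mul_comm (r T) (((T : ℝ) + τ - 1) ^ 2)]
end

section
/- Let c ≥ 0, let (β_t)_{t≥0} be a sequence of nonnegative real numbers, set α_t = (2/(t+2))^{2/3} for integers t ≥ 0, and let (r_t)_{t≥0} be a nonnegative real sequence satisfying r_{t+1} ≤ (1 − α_t)·r_t + c·β_t for all t ≥ 0. Then for every integer T ≥ 0: r_T ≤ r_0/(T+1)^{1/3} + c·(Σ_{t=0}^{T−1} β_t·(t+2)^{1/3})/(T+1)^{1/3}. -/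
open Finset

lemma cube_rpow_third (y : ℝ) (hy : 0 ≤ y) : (y ^ ((1:ℝ)/3)) ^ 3 = y := by
  rw [← Real.rpow_natCast (y ^ ((1:ℝ)/3)) 3, ← Real.rpow_mul hy]
  norm_num

lemma key_ineq (x : ℝ) (hx : 0 ≤ x) :
    (1 - (2/(x+2)) ^ ((2:ℝ)/3)) * ((x+2) ^ ((1:ℝ)/3)) ≤ (x+1) ^ ((1:ℝ)/3) := by
  set u := (x+1) ^ ((1:ℝ)/3) with hu
  set v := (x+2) ^ ((1:ℝ)/3) with hv
  have hx1 : (0:ℝ) ≤ x + 1 := by linarith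
  have hx2 : (0:ℝ) ≤ x + 2 := by linarith
  have hu3 : u ^ 3 = x + 1 := cube_rpow_third _ hx1
  have hv3 : v ^ 3 = x + 2 := cube_rpow_third _ hx2
  have hu1 : 1 ≤ u := by
    rw [hu]
    calc (1:ℝ) = 1 ^ ((1:ℝ)/3) := by rw [Real.one_rpow]
    _ ≤ (x+1) ^ ((1:ℝ)/3) := Real.rpow_le_rpow (by norm_num) (by linarith) (by norm_num)
  have huv : u ≤ v := Real.rpow_le_rpow hx1 (by linarith) (by norm_num)
  have hv1 : 1 ≤ v := le_trans hu1 huv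
  have hvpos : (0:ℝ) < v := lt_of_lt_of_le one_pos hv1
  have hw : (1:ℝ) ≤ (2:ℝ) ^ ((2:ℝ)/3) := by
    calc (1:ℝ) = 1 ^ ((2:ℝ)/3) := by rw [Real.one_rpow]
    _ ≤ (2:ℝ) ^ ((2:ℝ)/3) := Real.rpow_le_rpow (by norm_num) (by norm_num) (by norm_num)
  have halpha : (2/(x+2)) ^ ((2:ℝ)/3) = (2:ℝ) ^ ((2:ℝ)/3) / v ^ 2 := by
    rw [Real.div_rpow (by norm_num) hx2, hv, ← Real.rpow_natCast ((x+2)^((1:ℝ)/3)) 2,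
      ← Real.rpow_mul hx2]
    norm_num
  rw [halpha]
  have h1 : (v - u) * (v^2 + u*v + u^2) = 1 := by linear_combination hv3 - hu3
  have h2 : v - u ≤ (2:ℝ) ^ ((2:ℝ)/3) / v := by
    rw [le_div_iff₀ hvpos]
    nlinarith [h1, hw, hu1, huv, hv1]
  have h3 : (1 - (2:ℝ) ^ ((2:ℝ)/3) / v^2) * v = v - ((2:ℝ) ^ ((2:ℝ)/3)) / v := by
    field_simp
  rw [h3]
  linarith

/-- auxiliary recursion lemma for step sizes `α_t = (2/(t+2))^{2/3}`.
If the nonnegative sequence `r` satisfies `r_{t+1} ≤ (1 - α_t) r_t + c β_t`, then for every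
`T ≥ 0`, `r_T ≤ r_0/(T+1)^{1/3} + c (∑_{t=0}^{T-1} β_t (t+2)^{1/3}) / (T+1)^{1/3}`. -/
theorem stmt_5 (c : ℝ) (hc : 0 ≤ c) (β : ℕ → ℝ) (hβ : ∀ t, 0 ≤ β t)
    (r : ℕ → ℝ) (hr : ∀ t, 0 ≤ r t)
    (hrec : ∀ t : ℕ, r (t + 1) ≤ (1 - (2 / ((t : ℝ) + 2)) ^ ((2 : ℝ) / 3)) * r t + c * β t)
    (T : ℕ) :
    r T ≤ r 0 / ((T : ℝ) + 1) ^ ((1 : ℝ) / 3)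
      + c * (∑ t ∈ range T, β t * ((t : ℝ) + 2) ^ ((1 : ℝ) / 3))
        / ((T : ℝ) + 1) ^ ((1 : ℝ) / 3) := by
  have main : ∀ T : ℕ, r T * ((T : ℝ) + 1) ^ ((1:ℝ)/3)
      ≤ r 0 + c * (∑ t ∈ range T, β t * ((t : ℝ) + 2) ^ ((1:ℝ)/3)) := by
    intro T
    induction T with
    | zero => simp [Real.one_rpow]
    | succ n ih =>
      have hx : (0:ℝ) ≤ (n : ℝ) := Nat.cast_nonneg n
      have hα : (0:ℝ) ≤ 1 - (2 / ((n : ℝ) + 2)) ^ ((2:ℝ)/3) := by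
        have h2 : (2:ℝ) / ((n:ℝ) + 2) ≤ 1 := by
          rw [div_le_one (by linarith)]; linarith
        have := Real.rpow_le_one (by positivity) h2 (by norm_num : (0:ℝ) ≤ 2/3)
        linarith
      have hvpos : (0:ℝ) < ((n:ℝ) + 2) ^ ((1:ℝ)/3) := by positivity
      have step : r (n+1) * ((n:ℝ) + 2) ^ ((1:ℝ)/3)
          ≤ r n * ((n:ℝ) + 1) ^ ((1:ℝ)/3) + c * (β n * ((n:ℝ) + 2) ^ ((1:ℝ)/3)) := by
        calc r (n+1) * ((n:ℝ) + 2) ^ ((1:ℝ)/3)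
            ≤ ((1 - (2 / ((n:ℝ) + 2)) ^ ((2:ℝ)/3)) * r n + c * β n) * ((n:ℝ) + 2) ^ ((1:ℝ)/3) :=
              mul_le_mul_of_nonneg_right (hrec n) (le_of_lt hvpos)
          _ = ((1 - (2 / ((n:ℝ) + 2)) ^ ((2:ℝ)/3)) * ((n:ℝ) + 2) ^ ((1:ℝ)/3)) * r n
              + c * (β n * ((n:ℝ) + 2) ^ ((1:ℝ)/3)) := by ring
          _ ≤ ((n:ℝ) + 1) ^ ((1:ℝ)/3) * r n + c * (β n * ((n:ℝ) + 2) ^ ((1:ℝ)/3)) := by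
              gcongr ?_ * r n + _
              · exact hr n
              · exact key_ineq (n : ℝ) hx
          _ = r n * ((n:ℝ) + 1) ^ ((1:ℝ)/3) + c * (β n * ((n:ℝ) + 2) ^ ((1:ℝ)/3)) := by ring
      have hsum : ∑ t ∈ range (n+1), β t * ((t : ℝ) + 2) ^ ((1:ℝ)/3)
          = (∑ t ∈ range n, β t * ((t : ℝ) + 2) ^ ((1:ℝ)/3)) + β n * ((n:ℝ) + 2) ^ ((1:ℝ)/3) :=
        Finset.sum_range_succ _ n
      have : r (n+1) * ((n:ℝ) + 2) ^ ((1:ℝ)/3)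
          ≤ r 0 + c * (∑ t ∈ range (n+1), β t * ((t : ℝ) + 2) ^ ((1:ℝ)/3)) := by
        rw [hsum]; linarith
      convert this using 3
      push_cast
      ring
  have hTpos : (0:ℝ) < ((T:ℝ) + 1) ^ ((1:ℝ)/3) := by positivity
  rw [← add_div, le_div_iff₀ hTpos]
  linarith [main T]
end

section
/- Let q ∈ [0,1] and define η_t = (2/(t+2))^q for integers t ≥ 0. Then for every integer T ≥ 1: Π_{t=0}^{T−1} (1 − η_{t+1}) ≤ η_T. -/
open Finset

lemma rpow_ge_self_aux (x q : ℝ) (hx0 : 0 < x) (hx1 : x ≤ 1) (hq1 : q ≤ 1) :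
    x ≤ x ^ q := by
  have := Real.rpow_le_rpow_of_exponent_ge hx0 hx1 hq1
  simpa using this

lemma tele_aux : ∀ n : ℕ, ∏ t ∈ range n, (((t : ℝ) + 1) / ((t : ℝ) + 3))
    = 2 / (((n : ℝ) + 1) * ((n : ℝ) + 2)) := by
  intro n
  induction n with
  | zero => norm_num
  | succ m ih =>
    rw [prod_range_succ, ih]
    push_cast
    have h1 : ((m : ℝ) + 1) ≠ 0 := by positivity
    have h2 : ((m : ℝ) + 2) ≠ 0 := by positivity
    have h3 : ((m : ℝ) + 3) ≠ 0 := by positivity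
    field_simp
    ring

/-- decreasing step-size estimate, second assertion. For `q ∈ [0,1]` and
`η_t = (2/(t+2))^q`, one has `∏_{t=0}^{T-1} (1 - η_{t+1}) ≤ η_T` for every integer `T ≥ 1`.
Here `η_{t+1} = (2/(t+3))^q`. -/
theorem stmt_7 (q : ℝ) (hq0 : 0 ≤ q) (hq1 : q ≤ 1) (T : ℕ) (hT : 1 ≤ T) :
    ∏ t ∈ range T, (1 - (2 / ((t : ℝ) + 3)) ^ q) ≤ (2 / ((T : ℝ) + 2)) ^ q := by
  have step1 : ∏ t ∈ range T, (1 - (2 / ((t : ℝ) + 3)) ^ q)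
      ≤ ∏ t ∈ range T, (((t : ℝ) + 1) / ((t : ℝ) + 3)) := by
    apply Finset.prod_le_prod
    · intro t _
      have hb0 : (0 : ℝ) < 2 / ((t : ℝ) + 3) := by positivity
      have hb1 : 2 / ((t : ℝ) + 3) ≤ 1 := by
        rw [div_le_one (by positivity)]; linarith [Nat.cast_nonneg (α := ℝ) t]
      have : (2 / ((t : ℝ) + 3)) ^ q ≤ 1 := Real.rpow_le_one hb0.le hb1 hq0
      linarith
    · intro t _
      have hb0 : (0 : ℝ) < 2 / ((t : ℝ) + 3) := by positivity
      have hb1 : 2 / ((t : ℝ) + 3) ≤ 1 := by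
        rw [div_le_one (by positivity)]; linarith [Nat.cast_nonneg (α := ℝ) t]
      have hge : 2 / ((t : ℝ) + 3) ≤ (2 / ((t : ℝ) + 3)) ^ q :=
        rpow_ge_self_aux _ _ hb0 hb1 hq1
      have h3 : ((t : ℝ) + 3) ≠ 0 := by positivity
      have : ((t : ℝ) + 1) / ((t : ℝ) + 3) = 1 - 2 / ((t : ℝ) + 3) := by
        field_simp; ring
      rw [this]
      linarith
  rw [tele_aux] at step1
  have hT1 : (1 : ℝ) ≤ (T : ℝ) := by exact_mod_cast hT
  have step2 : 2 / (((T : ℝ) + 1) * ((T : ℝ) + 2)) ≤ 2 / ((T : ℝ) + 2) := by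
    apply div_le_div_of_nonneg_left (by norm_num) (by positivity)
    nlinarith
  have hb0 : (0 : ℝ) < 2 / ((T : ℝ) + 2) := by positivity
  have hb1 : 2 / ((T : ℝ) + 2) ≤ 1 := by
    rw [div_le_one (by positivity)]; linarith
  have step3 : 2 / ((T : ℝ) + 2) ≤ (2 / ((T : ℝ) + 2)) ^ q :=
    rpow_ge_self_aux _ _ hb0 hb1 hq1
  linarith
end

section
/- Let q ∈ [0,1) and p ≥ 0. There exists a constant C > 0, depending only on p and q, such that for every γ₀ > 0 and every integer T ≥ 1, setting η_t = (2/(t+2))^q and γ_t = γ₀·(2/(t+2))^p for integers t ≥ 0, one has: Σ_{t=0}^{T−1} γ_t · Π_{τ=t+1}^{T−1} (1 − η_τ) ≤ C · γ_T · η_T^{−1}, where the product over an empty index range (for t = T−1) is equal to 1. -/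
open Finset

private lemma base_pos (t : ℕ) : (0:ℝ) < 2 / ((t:ℝ) + 2) := by positivity

private lemma base_le_one (t : ℕ) : 2 / ((t:ℝ) + 2) ≤ 1 := by
  rw [div_le_one (by positivity)]
  have := Nat.cast_nonneg (α := ℝ) t
  linarith

private lemma eta_pos (q : ℝ) (t : ℕ) : 0 < (2 / ((t:ℝ) + 2)) ^ q :=
  Real.rpow_pos_of_pos (base_pos t) q

private lemma eta_le_one (q : ℝ) (hq : 0 ≤ q) (t : ℕ) : (2 / ((t:ℝ) + 2)) ^ q ≤ 1 :=
  Real.rpow_le_one (base_pos t).le (base_le_one t) hq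

private lemma bernoulli_aux (x r M : ℝ) (hx0 : 0 < x) (hx1 : x ≤ 1)
    (hM1 : 1 ≤ M) (hMr : r ≤ M) : 1 - x ^ r ≤ M * (1 - x) := by
  rcases le_total r 1 with h | h
  · have hxr : x ^ (1:ℝ) ≤ x ^ r := Real.rpow_le_rpow_of_exponent_ge hx0 hx1 h
    rw [Real.rpow_one] at hxr
    nlinarith
  · have hb : 1 + r * (x - 1) ≤ x ^ r := by
      have := one_add_mul_self_le_rpow_one_add (by linarith : (-1:ℝ) ≤ x - 1) h
      simpa using this
    nlinarith

private lemma eta_big (q M : ℝ) (hq0 : 0 ≤ q) (hq1 : q < 1) (hM1 : 1 ≤ M) (T : ℕ)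
    (hT2 : (2*M) ^ ((1-q)⁻¹) ≤ (T:ℝ) + 2) :
    2 * M / ((T:ℝ)+3) ≤ (2 / ((T:ℝ) + 2)) ^ q := by
  have h2M : (0:ℝ) < 2 * M := by linarith
  have h1q : (0:ℝ) < 1 - q := by linarith
  have hpow : 2 * M ≤ ((T:ℝ)+2) ^ (1-q) := by
    have := Real.rpow_le_rpow (by positivity) hT2 h1q.le
    rwa [Real.rpow_inv_rpow h2M.le h1q.ne'] at this
  have hcomp : (2 / ((T:ℝ) + 2)) ^ q * ((T:ℝ)+2) = 2 ^ q * ((T:ℝ)+2) ^ (1-q) := by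
    rw [Real.div_rpow (by norm_num) (by positivity),
      Real.rpow_sub (by positivity : (0:ℝ) < (T:ℝ)+2), Real.rpow_one]
    have hTq : ((T:ℝ)+2) ^ q ≠ 0 := by positivity
    field_simp
  have h2q : (1:ℝ) ≤ 2 ^ q := Real.one_le_rpow (by norm_num) hq0
  have hTpow : (0:ℝ) < ((T:ℝ)+2) ^ (1-q) := Real.rpow_pos_of_pos (by positivity) _
  have hηpos : 0 < (2 / ((T:ℝ) + 2)) ^ q := eta_pos q T
  have hηT2 : 2 * M ≤ (2 / ((T:ℝ) + 2)) ^ q * ((T:ℝ)+2) := by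
    rw [hcomp]; nlinarith
  rw [div_le_iff₀ (by positivity : (0:ℝ) < (T:ℝ)+3)]
  nlinarith

private lemma step_arith (C γ₀ η a a' M T3 : ℝ) (hC2 : 2 ≤ C) (hγ₀ : 0 < γ₀)
    (hηpos : 0 < η) (hapos : 0 < a) (hT3 : 0 < T3) (hM1 : 1 ≤ M)
    (hdrop : a - a' ≤ a * (M / T3)) (hηbig : 2 * M / T3 ≤ η) :
    (1 - η) * (C * γ₀ * a) + γ₀ * (a * η) ≤ C * γ₀ * a' := by
  have hM0 : (0:ℝ) < M := by linarith
  have hD : (0:ℝ) < M / T3 := div_pos hM0 hT3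
  have h1 : C * (M / T3) ≤ (C - 1) * η := by
    have e1 : (C - 1) * (2 * M / T3) ≤ (C - 1) * η :=
      mul_le_mul_of_nonneg_left hηbig (by linarith)
    have e2 : (0:ℝ) ≤ (C - 2) * (M / T3) := mul_nonneg (by linarith) hD.le
    have e3 : (C - 1) * (2 * M / T3) = C * (M / T3) + (C - 2) * (M / T3) := by ring
    linarith
  have h2 := mul_le_mul_of_nonneg_left hdrop (by positivity : (0:ℝ) ≤ C * γ₀)
  have h3 := mul_le_mul_of_nonneg_left h1 (by positivity : (0:ℝ) ≤ γ₀ * a)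
  nlinarith

private lemma sum_rec (f g : ℕ → ℝ) (T : ℕ) :
    ∑ t ∈ range (T+1), f t * ∏ s ∈ Ico (t+1) (T+1), g s
      = g T * (∑ t ∈ range T, f t * ∏ s ∈ Ico (t+1) T, g s) + f T := by
  rw [Finset.sum_range_succ]
  have h1 : ∏ s ∈ Ico (T+1) (T+1), g s = 1 := by simp
  rw [h1, mul_one, Finset.mul_sum]
  congr 1
  apply Finset.sum_congr rfl
  intro t ht
  have ht' : t + 1 ≤ T := Nat.succ_le_of_lt (Finset.mem_range.mp ht)
  rw [Finset.prod_Ico_succ_top ht']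
  ring

/-- key weighted-sum estimate. For `q ∈ [0,1)` and `p ≥ 0`, there is a
constant `C > 0` depending only on `p, q` such that for every `γ₀ > 0` and every `T ≥ 1`,
with `η_t = (2/(t+2))^q` and `γ_t = γ₀ (2/(t+2))^p`,
`∑_{t=0}^{T-1} γ_t ∏_{s=t+1}^{T-1} (1 - η_s) ≤ C γ_T η_T⁻¹`
(the empty product, for `t = T-1`, being `1`). -/
theorem stmt_8 (q p : ℝ) (hq0 : 0 ≤ q) (hq1 : q < 1) (hp : 0 ≤ p) :
    ∃ C > (0 : ℝ), ∀ γ₀ : ℝ, 0 < γ₀ → ∀ T : ℕ, 1 ≤ T →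
      ∑ t ∈ range T, (γ₀ * (2 / ((t : ℝ) + 2)) ^ p) *
          ∏ s ∈ Ico (t + 1) T, (1 - (2 / ((s : ℝ) + 2)) ^ q)
        ≤ C * (γ₀ * (2 / ((T : ℝ) + 2)) ^ p) * ((2 / ((T : ℝ) + 2)) ^ q)⁻¹ := by
  set M : ℝ := max (p - q) 1 with hMdef
  have hM1 : (1:ℝ) ≤ M := le_max_right _ _
  have hMr : p - q ≤ M := le_max_left _ _
  obtain ⟨N, hN⟩ := exists_nat_ge (max 2 ((2*M) ^ ((1-q)⁻¹)))
  have hN2 : (2:ℝ) ≤ N := le_trans (le_max_left _ _) hN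
  have hN1 : 1 ≤ N := by exact_mod_cast le_trans (by norm_num : (1:ℝ) ≤ 2) hN2
  have hNM : (2*M) ^ ((1-q)⁻¹) ≤ (N:ℝ) := le_trans (le_max_right _ _) hN
  set C : ℝ := max ((N:ℝ) * (((N:ℝ)+2)/2) ^ |p-q|) 2 with hCdef
  have hC2 : (2:ℝ) ≤ C := le_max_right _ _
  have hC0 : (0:ℝ) < C := by linarith
  refine ⟨C, hC0, ?_⟩
  intro γ₀ hγ₀
  -- rewrite the RHS as `C * γ₀ * (2/(T+2))^(p-q)`
  have hRHS : ∀ T : ℕ, C * (γ₀ * (2 / ((T : ℝ) + 2)) ^ p) * ((2 / ((T : ℝ) + 2)) ^ q)⁻¹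
      = C * γ₀ * (2 / ((T : ℝ) + 2)) ^ (p - q) := by
    intro T
    rw [Real.rpow_sub (base_pos T)]
    field_simp
  -- the key claim, with simplified RHS
  suffices h : ∀ T : ℕ, 1 ≤ T →
      ∑ t ∈ range T, (γ₀ * (2 / ((t : ℝ) + 2)) ^ p) *
          ∏ s ∈ Ico (t + 1) T, (1 - (2 / ((s : ℝ) + 2)) ^ q)
        ≤ C * γ₀ * (2 / ((T : ℝ) + 2)) ^ (p - q) by
    intro T hT
    rw [hRHS T]
    exact h T hT
  -- direct bound, valid for all `1 ≤ T ≤ N`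
  have direct : ∀ T : ℕ, 1 ≤ T → T ≤ N →
      ∑ t ∈ range T, (γ₀ * (2 / ((t : ℝ) + 2)) ^ p) *
          ∏ s ∈ Ico (t + 1) T, (1 - (2 / ((s : ℝ) + 2)) ^ q)
        ≤ C * γ₀ * (2 / ((T : ℝ) + 2)) ^ (p - q) := by
    intro T hT1 hTN
    have hsum : ∑ t ∈ range T, (γ₀ * (2 / ((t : ℝ) + 2)) ^ p) *
          ∏ s ∈ Ico (t + 1) T, (1 - (2 / ((s : ℝ) + 2)) ^ q) ≤ (N:ℝ) * γ₀ := by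
      calc ∑ t ∈ range T, (γ₀ * (2 / ((t : ℝ) + 2)) ^ p) *
            ∏ s ∈ Ico (t + 1) T, (1 - (2 / ((s : ℝ) + 2)) ^ q)
          ≤ ∑ _t ∈ range T, γ₀ := by
            apply Finset.sum_le_sum
            intro t _
            have h1 : (γ₀ * (2 / ((t : ℝ) + 2)) ^ p) ≤ γ₀ := by
              nlinarith [eta_le_one p hp t, eta_pos p t]
            have h2 : ∏ s ∈ Ico (t + 1) T, (1 - (2 / ((s : ℝ) + 2)) ^ q) ≤ 1 :=
              Finset.prod_le_one (fun s _ => by nlinarith [eta_le_one q hq0 s])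
                (fun s _ => by nlinarith [eta_pos q s])
            have h3 : (0:ℝ) ≤ ∏ s ∈ Ico (t + 1) T, (1 - (2 / ((s : ℝ) + 2)) ^ q) :=
              Finset.prod_nonneg (fun s _ => by nlinarith [eta_le_one q hq0 s])
            calc (γ₀ * (2 / ((t : ℝ) + 2)) ^ p) *
                  ∏ s ∈ Ico (t + 1) T, (1 - (2 / ((s : ℝ) + 2)) ^ q)
                ≤ (γ₀ * (2 / ((t : ℝ) + 2)) ^ p) * 1 := by
                  apply mul_le_mul_of_nonneg_left h2
                  positivity
              _ = γ₀ * (2 / ((t : ℝ) + 2)) ^ p := by ring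
              _ ≤ γ₀ := h1
        _ = (T:ℝ) * γ₀ := by rw [Finset.sum_const, Finset.card_range]; simp [nsmul_eq_mul]
        _ ≤ (N:ℝ) * γ₀ := by
            apply mul_le_mul_of_nonneg_right _ hγ₀.le
            exact_mod_cast hTN
    refine hsum.trans ?_
    -- `(2/(T+2))^(p-q) ≥ (2/(N+2))^|p-q|`
    have hbase : (2:ℝ) / ((N:ℝ) + 2) ≤ 2 / ((T:ℝ) + 2) := by
      apply div_le_div_of_nonneg_left (by norm_num) (by positivity)
      have : (T:ℝ) ≤ (N:ℝ) := by exact_mod_cast hTN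
      linarith
    have hkey : (2 / ((N:ℝ) + 2)) ^ |p - q| ≤ (2 / ((T:ℝ) + 2)) ^ (p - q) := by
      rcases le_or_gt 0 (p - q) with hr | hr
      · rw [abs_of_nonneg hr]
        exact Real.rpow_le_rpow (base_pos N).le hbase hr
      · have h1 : (1:ℝ) ≤ (2 / ((T:ℝ) + 2)) ^ (p - q) :=
          Real.one_le_rpow_of_pos_of_le_one_of_nonpos (base_pos T) (base_le_one T) hr.le
        have h2 : (2 / ((N:ℝ) + 2)) ^ |p - q| ≤ 1 :=
          Real.rpow_le_one (base_pos N).le (base_le_one N) (abs_nonneg _)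
        linarith
    have hprod : (((N:ℝ)+2)/2) ^ |p-q| * (2 / ((N:ℝ) + 2)) ^ |p - q| = 1 := by
      rw [← Real.mul_rpow (by positivity) (by positivity)]
      have : (((N:ℝ)+2)/2) * (2 / ((N:ℝ) + 2)) = 1 := by
        field_simp
      rw [this, Real.one_rpow]
    have hCN : (N:ℝ) * (((N:ℝ)+2)/2) ^ |p-q| ≤ C := le_max_left _ _
    have hpos1 : (0:ℝ) < (((N:ℝ)+2)/2) ^ |p-q| := Real.rpow_pos_of_pos (by positivity) _
    have hpos2 : (0:ℝ) < (2 / ((N:ℝ) + 2)) ^ |p - q| := Real.rpow_pos_of_pos (base_pos N) _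
    calc (N:ℝ) * γ₀ = ((N:ℝ) * (((N:ℝ)+2)/2) ^ |p-q|) * γ₀ * (2 / ((N:ℝ) + 2)) ^ |p - q| := by
          rw [mul_assoc ((N:ℝ) * (((N:ℝ)+2)/2) ^ |p-q|), mul_comm γ₀, ← mul_assoc,
            mul_assoc (N:ℝ), hprod]
          ring
      _ ≤ C * γ₀ * (2 / ((T:ℝ) + 2)) ^ (p - q) := by
          apply mul_le_mul
          · exact mul_le_mul_of_nonneg_right hCN hγ₀.le
          · exact hkey
          · exact hpos2.le
          · positivity
  -- inductive step, valid for `N ≤ T`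
  have step : ∀ T : ℕ, N ≤ T →
      (∑ t ∈ range T, (γ₀ * (2 / ((t : ℝ) + 2)) ^ p) *
          ∏ s ∈ Ico (t + 1) T, (1 - (2 / ((s : ℝ) + 2)) ^ q)
        ≤ C * γ₀ * (2 / ((T : ℝ) + 2)) ^ (p - q)) →
      ∑ t ∈ range (T+1), (γ₀ * (2 / ((t : ℝ) + 2)) ^ p) *
          ∏ s ∈ Ico (t + 1) (T+1), (1 - (2 / ((s : ℝ) + 2)) ^ q)
        ≤ C * γ₀ * (2 / (((T+1 : ℕ) : ℝ) + 2)) ^ (p - q) := by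
    intro T hNT ih
    rw [sum_rec (fun t => γ₀ * (2 / ((t : ℝ) + 2)) ^ p)
      (fun s => 1 - (2 / ((s : ℝ) + 2)) ^ q) T]
    set η : ℝ := (2 / ((T:ℝ) + 2)) ^ q with hη
    set a : ℝ := (2 / ((T:ℝ) + 2)) ^ (p - q) with ha
    set a' : ℝ := (2 / ((T:ℝ) + 1 + 2)) ^ (p - q) with ha'
    have hηpos : 0 < η := eta_pos q T
    have hηone : η ≤ 1 := eta_le_one q hq0 T
    have hapos : 0 < a := Real.rpow_pos_of_pos (base_pos T) _
    -- γ_T = γ₀ * a * η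
    have hγT : γ₀ * (2 / ((T:ℝ) + 2)) ^ p = γ₀ * (a * η) := by
      rw [ha, hη, ← Real.rpow_add (base_pos T)]
      norm_num
    -- a' ≥ a - a * M/(T+3)
    have hx0 : (0:ℝ) < ((T:ℝ)+2) / ((T:ℝ)+3) := by positivity
    have hx1 : ((T:ℝ)+2) / ((T:ℝ)+3) ≤ 1 := by
      rw [div_le_one (by positivity)]; linarith
    have hsplit : a' = a * (((T:ℝ)+2) / ((T:ℝ)+3)) ^ (p - q) := by
      rw [ha', ha, ← Real.mul_rpow (base_pos T).le hx0.le]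
      congr 1
      field_simp
      ring
    have hber : 1 - (((T:ℝ)+2) / ((T:ℝ)+3)) ^ (p - q)
        ≤ M * (1 - ((T:ℝ)+2) / ((T:ℝ)+3)) := bernoulli_aux _ _ _ hx0 hx1 hM1 hMr
    have hfrac : 1 - ((T:ℝ)+2) / ((T:ℝ)+3) = 1 / ((T:ℝ)+3) := by
      field_simp
      norm_num
    have hdrop : a - a' ≤ a * (M / ((T:ℝ)+3)) := by
      rw [hsplit]
      have : a - a * (((T:ℝ)+2) / ((T:ℝ)+3)) ^ (p - q)
          = a * (1 - (((T:ℝ)+2) / ((T:ℝ)+3)) ^ (p - q)) := by ring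
      rw [this]
      apply mul_le_mul_of_nonneg_left _ hapos.le
      rw [hfrac] at hber
      calc 1 - (((T:ℝ)+2) / ((T:ℝ)+3)) ^ (p - q) ≤ M * (1 / ((T:ℝ)+3)) := hber
        _ = M / ((T:ℝ)+3) := by ring
    -- η ≥ 2M/(T+3)
    have hηbig : 2 * M / ((T:ℝ)+3) ≤ η := by
      rw [hη]
      apply eta_big q M hq0 hq1 hM1 T
      have : (N:ℝ) ≤ (T:ℝ) := by exact_mod_cast hNT
      linarith
    -- put everything together
    have hS0 : (0:ℝ) ≤ ∑ t ∈ range T, (γ₀ * (2 / ((t : ℝ) + 2)) ^ p) *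
        ∏ s ∈ Ico (t + 1) T, (1 - (2 / ((s : ℝ) + 2)) ^ q) := by
      apply Finset.sum_nonneg
      intro t _
      apply mul_nonneg (by positivity)
      exact Finset.prod_nonneg (fun s _ => by nlinarith [eta_le_one q hq0 s])
    have hmono : (1 - η) * (∑ t ∈ range T, (γ₀ * (2 / ((t : ℝ) + 2)) ^ p) *
        ∏ s ∈ Ico (t + 1) T, (1 - (2 / ((s : ℝ) + 2)) ^ q))
        ≤ (1 - η) * (C * γ₀ * a) :=
      mul_le_mul_of_nonneg_left ih (by linarith)
    have hT3 : (0:ℝ) < (T:ℝ)+3 := by positivity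
    have hMT3 : 0 < M / ((T:ℝ)+3) := by positivity
    have hfinal : (1 - η) * (C * γ₀ * a) + γ₀ * (a * η) ≤ C * γ₀ * a' :=
      step_arith C γ₀ η a a' M ((T:ℝ)+3) hC2 hγ₀ hηpos hapos (by positivity) hM1 hdrop hηbig
    calc (1 - η) * (∑ t ∈ range T, (γ₀ * (2 / ((t : ℝ) + 2)) ^ p) *
          ∏ s ∈ Ico (t + 1) T, (1 - (2 / ((s : ℝ) + 2)) ^ q)) + γ₀ * (2 / ((T:ℝ) + 2)) ^ p
        ≤ (1 - η) * (C * γ₀ * a) + γ₀ * (a * η) := by rw [hγT] at *; linarith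
      _ ≤ C * γ₀ * a' := hfinal
      _ = C * γ₀ * (2 / (((T+1 : ℕ) : ℝ) + 2)) ^ (p - q) := by push_cast; rw [ha']
  -- conclude by induction on `T ≥ 1`
  intro T hT
  induction T, hT using Nat.le_induction with
  | base => exact direct 1 le_rfl hN1
  | succ T hT1 ih =>
    rcases le_or_gt (T+1) N with h | h
    · exact direct (T+1) (by omega) h
    · exact step T (by omega) ih
end

section
/- Let c₁, c₂, c₃, c₄ ≥ 0, define η_t = 2/(t+2) for integers t ≥ 0, and let (δ_t)_{t≥0} be a nonnegative real sequence with δ_{t+1} ≤ (1 − η_t)·δ_t + c₁·η_t² + c₂·η_t^{3/2} + c₃·η_t + c₄·η_t^{1/2} for all t ≥ 0. Then for every integer T ≥ 1: δ_T ≤ δ_0/(T+1)² + 4c₁/(T+1) + 4c₂/(T+1)^{1/2} + 2c₃ + 4c₄·(T+1)^{1/2}. -/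
set_option maxHeartbeats 2000000 in
/-- resolving the final optimality-gap recursion in the N-HARPG analysis.
With `η_t = 2/(t+2)`, if the nonnegative sequence `δ` satisfies
`δ_{t+1} ≤ (1 - η_t) δ_t + c₁ η_t² + c₂ η_t^{3/2} + c₃ η_t + c₄ η_t^{1/2}`, then for every
`T ≥ 1`, `δ_T ≤ δ_0/(T+1)² + 4c₁/(T+1) + 4c₂/(T+1)^{1/2} + 2c₃ + 4c₄ (T+1)^{1/2}`. -/
theorem stmt_11 (c₁ c₂ c₃ c₄ : ℝ)
    (hc₁ : 0 ≤ c₁) (hc₂ : 0 ≤ c₂) (hc₃ : 0 ≤ c₃) (hc₄ : 0 ≤ c₄)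
    (δ : ℕ → ℝ) (hδ : ∀ t, 0 ≤ δ t)
    (hrec : ∀ t : ℕ, δ (t + 1) ≤ (1 - 2 / ((t : ℝ) + 2)) * δ t
      + c₁ * (2 / ((t : ℝ) + 2)) ^ 2 + c₂ * (2 / ((t : ℝ) + 2)) ^ ((3 : ℝ) / 2)
      + c₃ * (2 / ((t : ℝ) + 2)) + c₄ * (2 / ((t : ℝ) + 2)) ^ ((1 : ℝ) / 2)) :
    ∀ T : ℕ, 1 ≤ T →
      δ T ≤ δ 0 / ((T : ℝ) + 1) ^ 2 + 4 * c₁ / ((T : ℝ) + 1)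
        + 4 * c₂ / ((T : ℝ) + 1) ^ ((1 : ℝ) / 2) + 2 * c₃
        + 4 * c₄ * ((T : ℝ) + 1) ^ ((1 : ℝ) / 2) := by
  have two_pos : (0:ℝ) < 2 := by norm_num
  have hr0 : (0:ℝ) < (2:ℝ) ^ ((1:ℝ)/2) := Real.rpow_pos_of_pos two_pos _
  set r : ℝ := (2:ℝ) ^ ((1:ℝ)/2) with hrdef
  have hrr : r * r = 2 := by
    rw [hrdef, ← Real.rpow_add two_pos]; norm_num
  have hr1 : 1 ≤ r := by nlinarith
  have hr2 : r ≤ 2 := by nlinarith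
  intro T hT
  induction T, hT using Nat.le_induction with
  | base =>
    have h0 := hrec 0
    norm_num [Real.one_rpow] at h0
    have hd0 := hδ 0
    have e : ((1:ℕ):ℝ) + 1 = 2 := by norm_num
    rw [e, ← hrdef]
    have h2 : c₂ ≤ 4 * c₂ / r := by
      rw [le_div_iff₀ hr0]; nlinarith
    have h4 : c₄ ≤ 4 * c₄ * r := by nlinarith
    have h5 : (0:ℝ) ≤ δ 0 / 2 ^ 2 := by positivity
    linarith
  | succ T hT ih =>
    push_cast
    set s : ℝ := (T:ℝ) + 1 with hsdef
    have hs : 2 ≤ s := by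
      rw [hsdef]
      have : (1:ℝ) ≤ (T:ℝ) := by exact_mod_cast hT
      linarith
    have hspos : 0 < s := by linarith
    have hs1pos : 0 < s + 1 := by linarith
    set a : ℝ := s ^ ((1:ℝ)/2) with hadef
    set b : ℝ := (s+1) ^ ((1:ℝ)/2) with hbdef
    have hapos : 0 < a := Real.rpow_pos_of_pos hspos _
    have hbpos : 0 < b := Real.rpow_pos_of_pos hs1pos _
    have haa : a * a = s := by rw [hadef, ← Real.rpow_add hspos]; norm_num
    have hbb : b * b = s + 1 := by rw [hbdef, ← Real.rpow_add hs1pos]; norm_num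
    have hab : a ≤ b := by nlinarith
    have ha1 : 1 ≤ a := by nlinarith
    have hrT := hrec T
    rw [show (T:ℝ) + 2 = s + 1 from by rw [hsdef]; ring] at hrT
    have e32 : (2 / (s+1)) ^ ((3:ℝ)/2) = 2 * r / ((s+1) * b) := by
      rw [Real.div_rpow (by norm_num) hs1pos.le]
      rw [show (3:ℝ)/2 = 1 + 1/2 by norm_num, Real.rpow_add two_pos,
        Real.rpow_add hs1pos, Real.rpow_one, Real.rpow_one, hrdef, hbdef]
    have e12 : (2 / (s+1)) ^ ((1:ℝ)/2) = r / b := by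
      rw [Real.div_rpow (by norm_num) hs1pos.le, hrdef, hbdef]
    rw [e32, e12] at hrT
    have heta : 0 ≤ 1 - 2 / (s+1) := by
      rw [sub_nonneg, div_le_one hs1pos]; linarith
    have hstep := mul_le_mul_of_nonneg_left ih heta
    -- coefficient inequalities
    have k1 : (1 - 2/(s+1)) * (1/s^2) ≤ 1/(s+1)^2 := by
      rw [← sub_nonneg]
      have h : 1/(s+1)^2 - (1 - 2/(s+1)) * (1/s^2)
          = (s^2 - (s-1)*(s+1)) / (s^2 * (s+1)^2) := by
        field_simp; ring
      rw [h]
      apply div_nonneg (by nlinarith) (by positivity)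
    have k2 : (1 - 2/(s+1)) * (4/s) + (2/(s+1))^2 ≤ 4/(s+1) := by
      rw [← sub_nonneg]
      have h : 4/(s+1) - ((1 - 2/(s+1)) * (4/s) + (2/(s+1))^2)
          = (4*s*(s+1) - (4*(s-1)*(s+1) + 4*s)) / (s * (s+1)^2) := by
        field_simp; ring
      rw [h]
      apply div_nonneg (by nlinarith) (by positivity)
    have hXY : (s-1) * b ≤ a * s := by
      have h1 : ((s-1)*b)^2 ≤ (a*s)^2 := by nlinarith
      have h2 : 0 ≤ (s-1)*b + a*s := by nlinarith
      nlinarith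
    have k3 : (1 - 2/(s+1)) * (4/a) + 2*r/((s+1)*b) ≤ 4/b := by
      rw [← sub_nonneg]
      have h : 4/b - ((1 - 2/(s+1)) * (4/a) + 2*r/((s+1)*b))
          = (4*a*(s+1) - (4*(s-1)*b + 2*r*a)) / (a * (s+1) * b) := by
        field_simp; ring
      rw [h]
      apply div_nonneg (by nlinarith [hapos.le]) (by positivity)
    have k4 : (1 - 2/(s+1)) * 2 + 2/(s+1) ≤ 2 := by
      have h : (1 - 2/(s+1)) * 2 + 2/(s+1) = 2 - 2/(s+1) := by ring
      rw [h]
      have : 0 < 2/(s+1) := by positivity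
      linarith
    have hab2 : a * b ≤ s + 1 := by nlinarith
    have k5 : (1 - 2/(s+1)) * (4*a) + r/b ≤ 4*b := by
      rw [← sub_nonneg]
      have h : 4*b - ((1 - 2/(s+1)) * (4*a) + r/b)
          = (4*(s+1)*(b*b) - 4*(s-1)*(a*b) - r*(s+1)) / ((s+1) * b) := by
        field_simp; ring
      rw [h]
      apply div_nonneg (by nlinarith) (by positivity)
    have K1 : (1 - 2/(s+1)) * (δ 0 / s^2) ≤ δ 0 / (s+1)^2 := by
      calc (1 - 2/(s+1)) * (δ 0 / s^2) = δ 0 * ((1 - 2/(s+1)) * (1/s^2)) := by ring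
        _ ≤ δ 0 * (1/(s+1)^2) := mul_le_mul_of_nonneg_left k1 (hδ 0)
        _ = δ 0 / (s+1)^2 := by ring
    have K2 : (1 - 2/(s+1)) * (4*c₁/s) + c₁ * (2/(s+1))^2 ≤ 4*c₁/(s+1) := by
      calc (1 - 2/(s+1)) * (4*c₁/s) + c₁ * (2/(s+1))^2
          = c₁ * ((1 - 2/(s+1)) * (4/s) + (2/(s+1))^2) := by ring
        _ ≤ c₁ * (4/(s+1)) := mul_le_mul_of_nonneg_left k2 hc₁
        _ = 4*c₁/(s+1) := by ring
    have K3 : (1 - 2/(s+1)) * (4*c₂/a) + c₂ * (2*r/((s+1)*b)) ≤ 4*c₂/b := by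
      calc (1 - 2/(s+1)) * (4*c₂/a) + c₂ * (2*r/((s+1)*b))
          = c₂ * ((1 - 2/(s+1)) * (4/a) + 2*r/((s+1)*b)) := by ring
        _ ≤ c₂ * (4/b) := mul_le_mul_of_nonneg_left k3 hc₂
        _ = 4*c₂/b := by ring
    have K4 : (1 - 2/(s+1)) * (2*c₃) + c₃ * (2/(s+1)) ≤ 2*c₃ := by
      calc (1 - 2/(s+1)) * (2*c₃) + c₃ * (2/(s+1))
          = c₃ * ((1 - 2/(s+1)) * 2 + 2/(s+1)) := by ring
        _ ≤ c₃ * 2 := mul_le_mul_of_nonneg_left k4 hc₃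
        _ = 2*c₃ := by ring
    have K5 : (1 - 2/(s+1)) * (4*c₄*a) + c₄ * (r/b) ≤ 4*c₄*b := by
      calc (1 - 2/(s+1)) * (4*c₄*a) + c₄ * (r/b)
          = c₄ * ((1 - 2/(s+1)) * (4*a) + r/b) := by ring
        _ ≤ c₄ * (4*b) := mul_le_mul_of_nonneg_left k5 hc₄
        _ = 4*c₄*b := by ring
    calc δ (T + 1)
        ≤ (1 - 2/(s+1)) * δ T + c₁ * (2/(s+1))^2 + c₂ * (2*r/((s+1)*b))
          + c₃ * (2/(s+1)) + c₄ * (r/b) := hrT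
      _ ≤ (1 - 2/(s+1)) * (δ 0 / s^2 + 4*c₁/s + 4*c₂/a + 2*c₃ + 4*c₄*a)
          + c₁ * (2/(s+1))^2 + c₂ * (2*r/((s+1)*b))
          + c₃ * (2/(s+1)) + c₄ * (r/b) := by linarith [hstep]
      _ = ((1 - 2/(s+1)) * (δ 0 / s^2))
          + ((1 - 2/(s+1)) * (4*c₁/s) + c₁ * (2/(s+1))^2)
          + ((1 - 2/(s+1)) * (4*c₂/a) + c₂ * (2*r/((s+1)*b)))
          + ((1 - 2/(s+1)) * (2*c₃) + c₃ * (2/(s+1)))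
          + ((1 - 2/(s+1)) * (4*c₄*a) + c₄ * (r/b)) := by ring
      _ ≤ δ 0 / (s+1)^2 + 4*c₁/(s+1) + 4*c₂/b + 2*c₃ + 4*c₄*b :=
          add_le_add (add_le_add (add_le_add (add_le_add K1 K2) K3) K4) K5
end

section
/- Let d ≥ 1 be an integer, σ ≥ 0, L ≥ 0, Δ ≥ 0, Δ′ ≥ 0, γ₀ > 0. Define η_t = (2/(t+2))^{4/5} and γ_t = γ₀·2/(t+2) for integers t ≥ 0. On a probability space, let (ê_t)_{t≥0}, (e_t)_{t≥1}, (S_t)_{t≥1}, (Z_t)_{t≥1} be square-integrable ℝ^d-valued random sequences such that: (i) ê_t = (1 − η_t)·ê_{t−1} + η_t·e_t + (1 − η_t)·S_t + η_t·Z_t for all t ≥ 1; (ii) E[⟨e_s, e_t⟩] = 0 for all integers 1 ≤ s < t; (iii) E[‖e_t‖²] ≤ σ² for all t ≥ 1; (iv) E[‖ê_0‖] ≤ σ; (v) almost surely, ‖S_t‖ ≤ L·γ_{t−1}² + Δ + Δ′·γ_{t−1} and ‖Z_t‖ ≤ L·((1−η_t)²/η_t²)·γ_{t−1}² + Δ +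 Δ′·γ_{t−1}/η_t for all t ≥ 1. Then there exist absolute constants C₁, C₂, C₃, C₄ > 0 (independent of all the above data) such that for every integer T ≥ 1: E[‖ê_T‖] ≤ C₁·σ·η_T^{1/2} + C₂·L·γ_T²·η_T^{−2} + C₃·Δ·η_T^{−1} + C₄·Δ′·γ_T·η_T^{−1}. -/
open MeasureTheory
open scoped RealInnerProductSpace

/-- The momentum parameter sequence `η_t = (2/(t+2))^{4/5}` of the N-PG-IGT analysis. -/
noncomputable def etaIGT (t : ℕ) : ℝ := (2 / ((t : ℝ) + 2)) ^ ((4 : ℝ) / 5)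

/-- The step-size sequence `γ_t = γ₀ · 2/(t+2)` of the N-PG-IGT analysis. -/
noncomputable def gammaIGT (γ₀ : ℝ) (t : ℕ) : ℝ := γ₀ * (2 / ((t : ℝ) + 2))

namespace Stmt14

lemma base_pos (t : ℕ) : (0:ℝ) < 2 / ((t : ℝ) + 2) := by positivity

lemma etaIGT_pos (t : ℕ) : 0 < etaIGT t := Real.rpow_pos_of_pos (base_pos t) _

lemma etaIGT_le_one (t : ℕ) : etaIGT t ≤ 1 := by
  have h1 : 2 / ((t:ℝ)+2) ≤ 1 := by
    rw [div_le_one (by positivity)]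
    have : (0:ℝ) ≤ (t:ℝ) := Nat.cast_nonneg t
    linarith
  calc etaIGT t ≤ 1 ^ ((4:ℝ)/5) := Real.rpow_le_rpow (base_pos t).le h1 (by norm_num)
  _ = 1 := Real.one_rpow _

lemma etaIGT_zero : etaIGT 0 = 1 := by
  simp [etaIGT]

lemma gammaIGT_pos {γ₀ : ℝ} (hγ : 0 < γ₀) (t : ℕ) : 0 < gammaIGT γ₀ t :=
  mul_pos hγ (base_pos t)

section Succ

variable (n : ℕ)

/-- abbreviations -/
noncomputable def xq (n : ℕ) : ℝ := 1 / ((n:ℝ) + 2)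
noncomputable def cq (n : ℕ) : ℝ := (1 + xq n) ^ ((1:ℝ)/5)

lemma xq_pos : 0 < xq n := by unfold xq; positivity
lemma xq_le_half : xq n ≤ 1/2 := by
  unfold xq
  rw [div_le_div_iff₀ (by positivity) (by norm_num)]
  have : (0:ℝ) ≤ (n:ℝ) := Nat.cast_nonneg n
  linarith

lemma one_add_xq_pos : (0:ℝ) < 1 + xq n := by have := xq_pos n; linarith

lemma cq_pow_five : (cq n) ^ (5:ℕ) = 1 + xq n := by
  unfold cq
  rw [← Real.rpow_natCast ((1 + xq n) ^ ((1:ℝ)/5)) 5, ← Real.rpow_mul (one_add_xq_pos n).le]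
  norm_num

lemma cq_pos : 0 < cq n := Real.rpow_pos_of_pos (one_add_xq_pos n) _

lemma one_le_cq : 1 ≤ cq n := by
  have := xq_pos n
  exact Real.one_le_rpow (by linarith) (by norm_num)

lemma cq_le : cq n ≤ 1 + (1/5) * xq n := by
  have := rpow_one_add_le_one_add_mul_self (s := xq n) (by have := xq_pos n; linarith)
    (p := (1:ℝ)/5) (by norm_num) (by norm_num)
  unfold cq; linarith

lemma cq_sq_le : (cq n)^(2:ℕ) ≤ 1 + (2/5) * xq n := by
  have h : (cq n)^(2:ℕ) = (1 + xq n) ^ ((2:ℝ)/5) := by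
    unfold cq
    rw [← Real.rpow_natCast ((1 + xq n) ^ ((1:ℝ)/5)) 2, ← Real.rpow_mul (one_add_xq_pos n).le]
    norm_num
  have := rpow_one_add_le_one_add_mul_self (s := xq n) (by have := xq_pos n; linarith)
    (p := (2:ℝ)/5) (by norm_num) (by norm_num)
  rw [h]; linarith

lemma cq_four_le : (cq n)^(4:ℕ) ≤ 1 + (4/5) * xq n := by
  have h : (cq n)^(4:ℕ) = (1 + xq n) ^ ((4:ℝ)/5) := by
    unfold cq
    rw [← Real.rpow_natCast ((1 + xq n) ^ ((1:ℝ)/5)) 4, ← Real.rpow_mul (one_add_xq_pos n).le]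
    norm_num
  have := rpow_one_add_le_one_add_mul_self (s := xq n) (by have := xq_pos n; linarith)
    (p := (4:ℝ)/5) (by norm_num) (by norm_num)
  rw [h]; linarith

/-- η_n = η_{n+1} · c⁴ -/
lemma eta_ratio : etaIGT n = etaIGT (n+1) * (cq n)^(4:ℕ) := by
  have hc : (cq n)^(4:ℕ) = (1 + xq n) ^ ((4:ℝ)/5) := by
    unfold cq
    rw [← Real.rpow_natCast ((1 + xq n) ^ ((1:ℝ)/5)) 4, ← Real.rpow_mul (one_add_xq_pos n).le]
    norm_num
  rw [hc]
  unfold etaIGT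
  rw [← Real.mul_rpow (base_pos (n+1)).le (one_add_xq_pos n).le]
  congr 1
  unfold xq
  push_cast
  field_simp
  ring

/-- η_n^{1/2} = η_{n+1}^{1/2} · c² -/
lemma eta_sqrt_ratio : (etaIGT n) ^ ((1:ℝ)/2) = (etaIGT (n+1)) ^ ((1:ℝ)/2) * (cq n)^(2:ℕ) := by
  rw [eta_ratio n, Real.mul_rpow (etaIGT_pos (n+1)).le (by positivity)]
  congr 1
  rw [← Real.rpow_natCast (cq n) 2, ← Real.rpow_natCast (cq n) 4,
    ← Real.rpow_mul (cq_pos n).le]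
  norm_num

/-- γ_n = γ_{n+1} · c⁵ -/
lemma gamma_ratio (γ₀ : ℝ) : gammaIGT γ₀ n = gammaIGT γ₀ (n+1) * (cq n)^(5:ℕ) := by
  rw [cq_pow_five]
  unfold gammaIGT xq
  push_cast
  field_simp
  ring

/-- lower bound: (8/7)·x ≤ η_{n+1} -/
lemma eta_low : (8/7) * xq n ≤ etaIGT (n+1) := by
  have h1 : xq n ≤ 2 / ((n:ℝ)+1+2) := by
    unfold xq
    rw [div_le_div_iff₀ (by positivity) (by positivity)]
    push_cast
    have : (0:ℝ) ≤ (n:ℝ) := Nat.cast_nonneg n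
    linarith
  -- η_{n+1} = (2/(n+3))^{4/5} ≥ (xq n)^{4/5}
  have h2 : (xq n) ^ ((4:ℝ)/5) ≤ etaIGT (n+1) := by
    unfold etaIGT
    push_cast
    exact Real.rpow_le_rpow (xq_pos n).le (by push_cast at h1 ⊢; linarith) (by norm_num)
  have hx := xq_pos n
  have hx2 := xq_le_half n
  have h3 : (8/7) * xq n ≤ (xq n) ^ ((4:ℝ)/5) := by
    have hxx : xq n = (xq n) ^ ((4:ℝ)/5) * (xq n) ^ ((1:ℝ)/5) := by
      rw [← Real.rpow_add hx]; norm_num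
    have h5 : (xq n) ^ ((1:ℝ)/5) ≤ (1/2 : ℝ) ^ ((1:ℝ)/5) :=
      Real.rpow_le_rpow hx.le hx2 (by norm_num)
    have h6 : ((1:ℝ)/2) ^ ((1:ℝ)/5) ≤ 7/8 := by
      refine le_of_pow_le_pow_left₀ (n := 5) (by norm_num) (by norm_num) ?_
      rw [← Real.rpow_natCast (((1:ℝ)/2) ^ ((1:ℝ)/5)) 5, ← Real.rpow_mul (by norm_num)]
      norm_num
    have h8 : (xq n) ^ ((1:ℝ)/5) ≤ 7/8 := h5.trans h6
    have h9 : (0:ℝ) < (xq n) ^ ((4:ℝ)/5) := Real.rpow_pos_of_pos hx _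
    nlinarith
  linarith


lemma eta_ge_base (t : ℕ) : 2 / ((t:ℝ) + 2) ≤ etaIGT t := by
  unfold etaIGT
  have h1 : 2 / ((t:ℝ)+2) ≤ 1 := by
    rw [div_le_one (by positivity)]
    have : (0:ℝ) ≤ (t:ℝ) := Nat.cast_nonneg t
    linarith
  calc 2 / ((t:ℝ)+2) = (2 / ((t:ℝ)+2)) ^ ((1:ℝ)) := (Real.rpow_one _).symm
  _ ≤ (2 / ((t:ℝ)+2)) ^ ((4:ℝ)/5) :=
      Real.rpow_le_rpow_of_exponent_ge (base_pos t) h1 (by norm_num)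

lemma eta'_low : 2 * xq n ≤ etaIGT n := by
  have := eta_ge_base n
  unfold xq
  rw [mul_one_div]
  linarith

lemma eta_mono_succ : etaIGT (n+1) ≤ etaIGT n := by
  rw [eta_ratio n]
  have h1 : (1:ℝ) ≤ (cq n)^(4:ℕ) := one_le_pow₀ (one_le_cq n)
  nlinarith [etaIGT_pos (n+1)]

section Ineq

variable (γ₀ : ℝ)

lemma ineq1 : 2*(1 - etaIGT (n+1))^2 * etaIGT n + (etaIGT (n+1))^2 ≤ 2 * etaIGT (n+1) := by
  rw [eta_ratio n]
  set η := etaIGT (n+1) with hηdef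
  set c := cq n
  set x := xq n
  have hη : 0 < η := etaIGT_pos (n+1)
  have hη1 : η ≤ 1 := etaIGT_le_one (n+1)
  have hx : 0 < x := xq_pos n
  have hc1 : (1:ℝ) ≤ c^(4:ℕ) := one_le_pow₀ (one_le_cq n)
  have hc4 : c^(4:ℕ) ≤ 1 + (4/5)*x := cq_four_le n
  have hlow' : 2*x ≤ η * c^(4:ℕ) := by
    have := eta'_low n
    rw [eta_ratio n] at this
    exact this
  nlinarith [sq_nonneg (1-η), mul_nonneg (sq_nonneg (1-η)) hη.le,
    mul_le_mul_of_nonneg_left hc4 (mul_nonneg hη.le hη.le),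
    mul_le_mul_of_nonneg_left hlow' hη.le,
    mul_le_mul_of_nonneg_left hc1 (mul_nonneg hη.le hη.le)]

lemma ineq2 : (1 - etaIGT (n+1)) * (etaIGT n) ^ ((1:ℝ)/2) ≤ (etaIGT (n+1)) ^ ((1:ℝ)/2) := by
  rw [eta_sqrt_ratio n]
  set s := (etaIGT (n+1)) ^ ((1:ℝ)/2) with hsdef
  have hs : 0 < s := Real.rpow_pos_of_pos (etaIGT_pos (n+1)) _
  have hη : 0 < etaIGT (n+1) := etaIGT_pos (n+1)
  have hη1 : etaIGT (n+1) ≤ 1 := etaIGT_le_one (n+1)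
  have hx : 0 < xq n := xq_pos n
  have hc2 : (cq n)^(2:ℕ) ≤ 1 + (2/5)*xq n := cq_sq_le n
  have hc0 : (0:ℝ) ≤ (cq n)^(2:ℕ) := by positivity
  have hlow : (8/7) * xq n ≤ etaIGT (n+1) := eta_low n
  have key : (1 - etaIGT (n+1)) * (cq n)^(2:ℕ) ≤ 1 := by nlinarith
  calc (1 - etaIGT (n+1)) * (s * (cq n)^(2:ℕ))
      = s * ((1 - etaIGT (n+1)) * (cq n)^(2:ℕ)) := by ring
  _ ≤ s * 1 := mul_le_mul_of_nonneg_left key hs.le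
  _ = s := mul_one s

lemma ineq3 : 2*(1 - etaIGT (n+1)) / etaIGT n + 2 ≤ 2 / etaIGT (n+1) := by
  have hη : 0 < etaIGT (n+1) := etaIGT_pos (n+1)
  have hη' : 0 < etaIGT n := etaIGT_pos n
  have hη1 : etaIGT (n+1) ≤ 1 := etaIGT_le_one (n+1)
  have hmono := eta_mono_succ n
  have h1 : 2*(1 - etaIGT (n+1)) / etaIGT n ≤ 2*(1 - etaIGT (n+1)) / etaIGT (n+1) :=
    div_le_div_of_nonneg_left (by linarith) hη hmono
  have h2 : 2*(1 - etaIGT (n+1)) / etaIGT (n+1) + 2 = 2 / etaIGT (n+1) := by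
    field_simp
    ring
  linarith

lemma ineq4 (hγ₀ : 0 < γ₀) : 4*(1 - etaIGT (n+1)) * gammaIGT γ₀ n / etaIGT n + 2 * gammaIGT γ₀ n
    ≤ 4 * gammaIGT γ₀ (n+1) / etaIGT (n+1) := by
  rw [eta_ratio n, gamma_ratio n γ₀]
  set η := etaIGT (n+1)
  set γ := gammaIGT γ₀ (n+1) with hγdef
  set c := cq n
  set x := xq n
  have hη : 0 < η := etaIGT_pos (n+1)
  have hη1 : η ≤ 1 := etaIGT_le_one (n+1)
  have hγ : 0 < γ := gammaIGT_pos hγ₀ (n+1)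
  have hc : 0 < c := cq_pos n
  have hx : 0 < x := xq_pos n
  have hx2 : x ≤ 1/2 := xq_le_half n
  have hc1 : (1:ℝ) ≤ c := one_le_cq n
  have hcle : c ≤ 1 + (1/5)*x := cq_le n
  have hc5 : c^(5:ℕ) = 1 + x := cq_pow_five n
  have hlow : (8/7) * x ≤ η := eta_low n
  have key : 4*(1-η)*c + 2*η*c^(5:ℕ) ≤ 4 := by nlinarith
  have heq : 4*(1-η) * (γ * c^(5:ℕ)) / (η * c^(4:ℕ)) + 2 * (γ * c^(5:ℕ))
      = γ/η * (4*(1-η)*c + 2*η*c^(5:ℕ)) := by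
    field_simp
  rw [heq]
  calc γ/η * (4*(1-η)*c + 2*η*c^(5:ℕ)) ≤ γ/η * 4 :=
    mul_le_mul_of_nonneg_left key (by positivity)
  _ = 4 * γ / η := by ring

lemma ineq5 (hγ₀ : 0 < γ₀) : 8*(1 - etaIGT (n+1)) * (gammaIGT γ₀ n)^2 / (etaIGT n)^2
      + 2 * (gammaIGT γ₀ n)^2 / etaIGT (n+1)
    ≤ 8 * (gammaIGT γ₀ (n+1))^2 / (etaIGT (n+1))^2 := by
  rw [eta_ratio n, gamma_ratio n γ₀]
  set η := etaIGT (n+1)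
  set γ := gammaIGT γ₀ (n+1) with hγdef
  set c := cq n
  set x := xq n
  have hη : 0 < η := etaIGT_pos (n+1)
  have hη1 : η ≤ 1 := etaIGT_le_one (n+1)
  have hγ : 0 < γ := gammaIGT_pos hγ₀ (n+1)
  have hc : 0 < c := cq_pos n
  have hx : 0 < x := xq_pos n
  have hx2 : x ≤ 1/2 := xq_le_half n
  have hc1 : (1:ℝ) ≤ c := one_le_cq n
  have hc2 : c^(2:ℕ) ≤ 1 + (2/5)*x := cq_sq_le n
  have hc5 : c^(5:ℕ) = 1 + x := cq_pow_five n
  have hc10 : c^(10:ℕ) = (1+x)^2 := by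
    rw [show (10:ℕ) = 5*2 by norm_num, pow_mul, hc5]
  have hlow : (8/7) * x ≤ η := eta_low n
  have key : 8*(1-η)*c^(2:ℕ) + 2*η*c^(10:ℕ) ≤ 8 := by
    rw [hc10]
    have h1 : 8*(1-η)*c^(2:ℕ) ≤ 8*(1-η)*(1 + (2/5)*x) :=
      mul_le_mul_of_nonneg_left hc2 (by nlinarith)
    nlinarith [mul_nonneg hη.le hx.le, mul_nonneg (mul_nonneg hη.le hx.le) hx.le,
      mul_nonneg hx.le hx.le]
  have heq : 8*(1-η) * (γ * c^(5:ℕ))^2 / ((η * c^(4:ℕ))^2) + 2 * (γ * c^(5:ℕ))^2 / η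
      = γ^2/η^2 * (8*(1-η)*c^(2:ℕ) + 2*η*c^(10:ℕ)) := by
    field_simp
  rw [heq]
  calc γ^2/η^2 * (8*(1-η)*c^(2:ℕ) + 2*η*c^(10:ℕ)) ≤ γ^2/η^2 * 8 :=
    mul_le_mul_of_nonneg_left key (by positivity)
  _ = 8 * γ^2 / η^2 := by ring

end Ineq
end Succ
end Stmt14

section MeasureAux

variable {Ω : Type} [MeasurableSpace Ω] {P : Measure Ω}
variable {d : ℕ}

local notation "E" => EuclideanSpace ℝ (Fin d)

lemma integrable_inner_of_memL2 {f g : Ω → E} (hf : MemLp f 2 P) (hg : MemLp g 2 P) :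
    Integrable (fun ω => ⟪f ω, g ω⟫) P := by
  have h := L2.integrable_inner (𝕜 := ℝ) (hf.toLp f) (hg.toLp g)
  apply h.congr
  filter_upwards [hf.coeFn_toLp, hg.coeFn_toLp] with ω h1 h2
  rw [h1, h2]

lemma integrable_norm_sq_of_memL2 {f : Ω → E} (hf : MemLp f 2 P) :
    Integrable (fun ω => ‖f ω‖^2) P := by
  have h := integrable_inner_of_memL2 hf hf
  apply h.congr
  filter_upwards with ω
  exact real_inner_self_eq_norm_sq (f ω)

lemma integrable_norm_of_memL2 [IsProbabilityMeasure P] {f : Ω → E} (hf : MemLp f 2 P) :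
    Integrable (fun ω => ‖f ω‖) P :=
  ((hf.mono_exponent one_le_two).integrable le_rfl).norm

lemma sq_integral_norm_le [IsProbabilityMeasure P] {f : Ω → E} (hf : MemLp f 2 P) :
    (∫ ω, ‖f ω‖ ∂P)^2 ≤ ∫ ω, ‖f ω‖^2 ∂P := by
  set m := ∫ ω, ‖f ω‖ ∂P with hm
  have hint1 : Integrable (fun ω => ‖f ω‖) P := integrable_norm_of_memL2 hf
  have hint2 : Integrable (fun ω => ‖f ω‖^2) P := integrable_norm_sq_of_memL2 hf
  have h0 : 0 ≤ ∫ ω, (‖f ω‖ - m)^2 ∂P := integral_nonneg (fun ω => sq_nonneg _)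
  have hexp : ∫ ω, (‖f ω‖ - m)^2 ∂P = (∫ ω, ‖f ω‖^2 ∂P) - m^2 := by
    have heq : (fun ω => (‖f ω‖ - m)^2)
        = fun ω => (‖f ω‖^2 - (2*m) * ‖f ω‖) + m^2 := by
      funext ω; ring
    have hsub : Integrable (fun ω => ‖f ω‖^2 - (2*m) * ‖f ω‖) P := by
      exact hint2.sub (hint1.const_mul (2*m))
    rw [heq, integral_add hsub (integrable_const _),
      integral_sub hint2 (hint1.const_mul (2*m)), integral_const_mul, integral_const]
    simp only [measureReal_def, measure_univ, ENNReal.toReal_one, smul_eq_mul, one_mul, ← hm]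
    ring
  rw [hexp] at h0
  linarith

end MeasureAux

/-- The pure-noise part of the momentum recursion. -/
noncomputable def uSeqIGT {Ω : Type} {d : ℕ} (e : ℕ → Ω → EuclideanSpace ℝ (Fin d)) :
    ℕ → Ω → EuclideanSpace ℝ (Fin d)
  | 0 => fun _ => 0
  | (n+1) => fun ω => (1 - etaIGT (n+1)) • uSeqIGT e n ω + etaIGT (n+1) • e (n+1) ω


set_option maxHeartbeats 2000000 in
/-- error bound for the N-PG-IGT momentum estimator, abstract form.
There are absolute constants `C₁, C₂, C₃, C₄ > 0` such that for any data satisfying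
`ê_t = (1-η_t) ê_{t-1} + η_t e_t + (1-η_t) S_t + η_t Z_t` with pairwise uncorrelated noises
`e_t` of second moment at most `σ²`, `E‖ê_0‖ ≤ σ`, and the almost sure bounds
`‖S_t‖ ≤ L γ_{t-1}² + Δ + Δ' γ_{t-1}` and
`‖Z_t‖ ≤ L ((1-η_t)²/η_t²) γ_{t-1}² + Δ + Δ' γ_{t-1}/η_t`, one has for all `T ≥ 1`,
`E‖ê_T‖ ≤ C₁ σ η_T^{1/2} + C₂ L γ_T² η_T⁻² + C₃ Δ η_T⁻¹ + C₄ Δ' γ_T η_T⁻¹`. -/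
theorem stmt_14 :
    ∃ C₁ > (0 : ℝ), ∃ C₂ > (0 : ℝ), ∃ C₃ > (0 : ℝ), ∃ C₄ > (0 : ℝ),
      ∀ (d : ℕ), 1 ≤ d →
      ∀ (σ L Δ Δ' γ₀ : ℝ), 0 ≤ σ → 0 ≤ L → 0 ≤ Δ → 0 ≤ Δ' → 0 < γ₀ →
      ∀ (Ω : Type) [MeasurableSpace Ω] (P : Measure Ω) [IsProbabilityMeasure P]
        (ehat e S Z : ℕ → Ω → EuclideanSpace ℝ (Fin d)),
        (∀ t, MemLp (ehat t) 2 P) →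
        (∀ t, MemLp (e t) 2 P) →
        (∀ t, MemLp (S t) 2 P) →
        (∀ t, MemLp (Z t) 2 P) →
        (∀ t : ℕ, 1 ≤ t → ∀ ω, ehat t ω =
          (1 - etaIGT t) • ehat (t - 1) ω + etaIGT t • e t ω
            + (1 - etaIGT t) • S t ω + etaIGT t • Z t ω) →
        (∀ s t : ℕ, 1 ≤ s → s < t → ∫ ω, ⟪e s ω, e t ω⟫ ∂P = 0) →
        (∀ t : ℕ, 1 ≤ t → ∫ ω, ‖e t ω‖ ^ 2 ∂P ≤ σ ^ 2) →
        (∫ ω, ‖ehat 0 ω‖ ∂P ≤ σ) →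
        (∀ t : ℕ, 1 ≤ t → ∀ᵐ ω ∂P,
          ‖S t ω‖ ≤ L * (gammaIGT γ₀ (t - 1)) ^ 2 + Δ + Δ' * gammaIGT γ₀ (t - 1) ∧
          ‖Z t ω‖ ≤ L * ((1 - etaIGT t) ^ 2 / (etaIGT t) ^ 2) * (gammaIGT γ₀ (t - 1)) ^ 2
            + Δ + Δ' * gammaIGT γ₀ (t - 1) / etaIGT t) →
        ∀ T : ℕ, 1 ≤ T →
          ∫ ω, ‖ehat T ω‖ ∂P ≤
            C₁ * σ * (etaIGT T) ^ ((1 : ℝ) / 2)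
              + C₂ * L * (gammaIGT γ₀ T) ^ 2 * ((etaIGT T) ^ 2)⁻¹
              + C₃ * Δ * (etaIGT T)⁻¹
              + C₄ * Δ' * gammaIGT γ₀ T * (etaIGT T)⁻¹ := by
  refine ⟨3, by norm_num, 8, by norm_num, 2, by norm_num, 4, by norm_num, ?_⟩
  intro d hd σ L Δ Δ' γ₀ hσ hL hΔ hΔ' hγ₀ Ω _ P _ ehat e S Z hehat2 he2 hS2 hZ2 hrec horth
    hvar h0 hSZ
  set u := uSeqIGT e with hu
  -- u is in L²
  have hu2 : ∀ t, MemLp (u t) 2 P := by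
    intro t
    induction t with
    | zero =>
      have : u 0 = fun _ => (0 : EuclideanSpace ℝ (Fin d)) := rfl
      rw [this]
      exact memLp_const 0
    | succ n ih =>
      exact MemLp.add (ih.const_smul (1 - etaIGT (n+1))) ((he2 (n+1)).const_smul (etaIGT (n+1)))
  -- orthogonality of u with future noise
  have horthu : ∀ t m : ℕ, t < m → ∫ ω, ⟪u t ω, e m ω⟫ ∂P = 0 := by
    intro t
    induction t with
    | zero =>
      intro m hm
      have : (fun ω => ⟪u 0 ω, e m ω⟫) = fun _ => (0:ℝ) := by
        funext ω
        show ⟪(0 : EuclideanSpace ℝ (Fin d)), e m ω⟫ = 0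
        exact inner_zero_left _
      rw [this, integral_zero]
    | succ n ih =>
      intro m hm
      have h1 : (fun ω => ⟪u (n+1) ω, e m ω⟫)
          = fun ω => (1 - etaIGT (n+1)) * ⟪u n ω, e m ω⟫
            + etaIGT (n+1) * ⟪e (n+1) ω, e m ω⟫ := by
        funext ω
        show ⟪(1 - etaIGT (n+1)) • u n ω + etaIGT (n+1) • e (n+1) ω, e m ω⟫ = _
        rw [inner_add_left, real_inner_smul_left, real_inner_smul_left]
      rw [h1, integral_add ((integrable_inner_of_memL2 (hu2 n) (he2 m)).const_mul _)
        ((integrable_inner_of_memL2 (he2 (n+1)) (he2 m)).const_mul _),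
        integral_const_mul, integral_const_mul, ih m (by omega),
        horth (n+1) m (by omega) (by omega), mul_zero, mul_zero, add_zero]
  -- second moment of u
  have husq : ∀ t, ∫ ω, ‖u t ω‖^2 ∂P ≤ 2 * σ^2 * etaIGT t := by
    intro t
    induction t with
    | zero =>
      have h1 : (fun ω => ‖u 0 ω‖^2) = fun _ => (0:ℝ) := by
        funext ω
        show ‖(0 : EuclideanSpace ℝ (Fin d))‖^2 = 0
        simp
      rw [h1, integral_zero, Stmt14.etaIGT_zero]
      nlinarith [sq_nonneg σ]
    | succ n ih =>
      have hη : 0 < etaIGT (n+1) := Stmt14.etaIGT_pos (n+1)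
      have hη1 : etaIGT (n+1) ≤ 1 := Stmt14.etaIGT_le_one (n+1)
      set η := etaIGT (n+1) with hηdef
      have hexp : (fun ω => ‖u (n+1) ω‖^2) = fun ω =>
          ((1-η)^2 * ‖u n ω‖^2 + (2*(1-η)*η) * ⟪u n ω, e (n+1) ω⟫)
            + η^2 * ‖e (n+1) ω‖^2 := by
        funext ω
        show ‖(1-η) • u n ω + η • e (n+1) ω‖^2 = _
        rw [norm_add_sq_real, norm_smul, norm_smul, real_inner_smul_left,
          real_inner_smul_right, mul_pow, mul_pow, Real.norm_eq_abs,
          Real.norm_eq_abs, abs_of_nonneg (by linarith), abs_of_nonneg hη.le]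
        ring
      have hI1 : Integrable (fun ω => (1-η)^2 * ‖u n ω‖^2) P :=
        (integrable_norm_sq_of_memL2 (hu2 n)).const_mul _
      have hI2 : Integrable (fun ω => (2*(1-η)*η) * ⟪u n ω, e (n+1) ω⟫) P :=
        (integrable_inner_of_memL2 (hu2 n) (he2 (n+1))).const_mul _
      have hI3 : Integrable (fun ω => η^2 * ‖e (n+1) ω‖^2) P :=
        (integrable_norm_sq_of_memL2 (he2 (n+1))).const_mul _
      have hI12 : Integrable (fun ω => (1-η)^2 * ‖u n ω‖^2
          + (2*(1-η)*η) * ⟪u n ω, e (n+1) ω⟫) P := by exact hI1.add hI2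
      rw [hexp, integral_add hI12 hI3, integral_add hI1 hI2,
        integral_const_mul, integral_const_mul, integral_const_mul,
        horthu n (n+1) (by omega), mul_zero, add_zero]
      have hvar' := hvar (n+1) (by omega)
      have hkey := Stmt14.ineq1 n
      have h1 : (1-η)^2 * (∫ ω, ‖u n ω‖^2 ∂P) ≤ (1-η)^2 * (2*σ^2*etaIGT n) :=
        mul_le_mul_of_nonneg_left ih (sq_nonneg _)
      have h2 : η^2 * (∫ ω, ‖e (n+1) ω‖^2 ∂P) ≤ η^2 * σ^2 :=
        mul_le_mul_of_nonneg_left hvar' (sq_nonneg _)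
      nlinarith [mul_le_mul_of_nonneg_left hkey (sq_nonneg σ)]
  -- remainder process r
  set r : ℕ → Ω → EuclideanSpace ℝ (Fin d) := fun t ω => ehat t ω - u t ω with hrdef
  have hr2 : ∀ t, MemLp (r t) 2 P := fun t => (hehat2 t).sub (hu2 t)
  have hrrec : ∀ n : ℕ, ∀ ω, r (n+1) ω = (1 - etaIGT (n+1)) • r n ω
      + ((1 - etaIGT (n+1)) • S (n+1) ω + etaIGT (n+1) • Z (n+1) ω) := by
    intro n ω
    have h := hrec (n+1) (by omega) ω
    simp only [Nat.add_sub_cancel] at h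
    show ehat (n+1) ω - u (n+1) ω = _
    rw [h]
    show _ - ((1 - etaIGT (n+1)) • u n ω + etaIGT (n+1) • e (n+1) ω) = _
    simp only [hrdef, smul_sub]
    abel
  -- one-step bound on E‖r‖
  have hrbnd : ∀ n : ℕ, ∫ ω, ‖r (n+1) ω‖ ∂P ≤ (1 - etaIGT (n+1)) * ∫ ω, ‖r n ω‖ ∂P
      + (2*L*(gammaIGT γ₀ n)^2 / etaIGT (n+1) + 2*Δ + 2*Δ'*(gammaIGT γ₀ n)) := by
    intro n
    have hη : 0 < etaIGT (n+1) := Stmt14.etaIGT_pos (n+1)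
    have hη1 : etaIGT (n+1) ≤ 1 := Stmt14.etaIGT_le_one (n+1)
    set η := etaIGT (n+1) with hηdef
    set γ' := gammaIGT γ₀ n with hγ'def
    have hγ' : 0 < γ' := Stmt14.gammaIGT_pos hγ₀ n
    set K := 2*L*γ'^2 / η + 2*Δ + 2*Δ'*γ' with hKdef
    have hae : ∀ᵐ ω ∂P, ‖r (n+1) ω‖ ≤ (1-η) * ‖r n ω‖ + K := by
      filter_upwards [hSZ (n+1) (by omega)] with ω hω
      obtain ⟨hS', hZ'⟩ := hω
      simp only [Nat.add_sub_cancel] at hS' hZ'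
      rw [hrrec n ω]
      have htri : ‖(1-η) • r n ω + ((1-η) • S (n+1) ω + η • Z (n+1) ω)‖
          ≤ (1-η) * ‖r n ω‖ + ((1-η) * ‖S (n+1) ω‖ + η * ‖Z (n+1) ω‖) := by
        calc ‖(1-η) • r n ω + ((1-η) • S (n+1) ω + η • Z (n+1) ω)‖
            ≤ ‖(1-η) • r n ω‖ + ‖(1-η) • S (n+1) ω + η • Z (n+1) ω‖ := norm_add_le _ _
        _ ≤ ‖(1-η) • r n ω‖ + (‖(1-η) • S (n+1) ω‖ + ‖η • Z (n+1) ω‖) := by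
            have := norm_add_le ((1-η) • S (n+1) ω) (η • Z (n+1) ω)
            linarith
        _ = (1-η) * ‖r n ω‖ + ((1-η) * ‖S (n+1) ω‖ + η * ‖Z (n+1) ω‖) := by
            rw [norm_smul, norm_smul, norm_smul, Real.norm_eq_abs,
              abs_of_nonneg (by linarith), Real.norm_eq_abs, abs_of_nonneg hη.le]
      have hbound : (1-η) * ‖S (n+1) ω‖ + η * ‖Z (n+1) ω‖ ≤ K := by
        have e1 : η * (L*((1-η)^2/η^2)*γ'^2 + Δ + Δ'*γ'/η)
            = L*(1-η)^2*γ'^2/η + η*Δ + Δ'*γ' := by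
          field_simp
        have h2 : η * ‖Z (n+1) ω‖ ≤ L*(1-η)^2*γ'^2/η + η*Δ + Δ'*γ' := by
          rw [← e1]
          exact mul_le_mul_of_nonneg_left hZ' hη.le
        have h3 : (1-η) * ‖S (n+1) ω‖ ≤ L*γ'^2 + Δ + Δ'*γ' := by
          have := mul_le_mul_of_nonneg_left hS' (by linarith : (0:ℝ) ≤ 1-η)
          nlinarith [norm_nonneg (S (n+1) ω)]
        have h4 : L*(1-η)^2*γ'^2/η ≤ L*γ'^2/η := by
          rw [div_le_div_iff_of_pos_right hη]
          have hsq : (1-η)^2 ≤ 1 := by nlinarith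
          calc L*(1-η)^2*γ'^2 = (L*γ'^2)*(1-η)^2 := by ring
          _ ≤ (L*γ'^2)*1 := mul_le_mul_of_nonneg_left hsq (mul_nonneg hL (sq_nonneg γ'))
          _ = L*γ'^2 := mul_one _
        have h5 : L*γ'^2 ≤ L*γ'^2/η := by
          rw [le_div_iff₀ hη]
          nlinarith [mul_nonneg hL (sq_nonneg γ')]
        rw [hKdef]
        have hthis : 2*L*γ'^2/η = L*γ'^2/η + L*γ'^2/η := by ring
        rw [hthis]
        have h6 : η*Δ ≤ Δ := by nlinarith
        linarith
      exact htri.trans (by linarith)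
    have hKint : Integrable (fun ω => (1-η) * ‖r n ω‖ + K) P :=
      ((integrable_norm_of_memL2 (hr2 n)).const_mul _).add (integrable_const _)
    calc ∫ ω, ‖r (n+1) ω‖ ∂P ≤ ∫ ω, ((1-η) * ‖r n ω‖ + K) ∂P :=
      integral_mono_ae (integrable_norm_of_memL2 (hr2 (n+1))) hKint hae
    _ = (1-η) * ∫ ω, ‖r n ω‖ ∂P + K := by
      rw [integral_add ((integrable_norm_of_memL2 (hr2 n)).const_mul _) (integrable_const _),
        integral_const_mul, integral_const]
      simp
  -- main induction on the remainder
  have hmain : ∀ t, ∫ ω, ‖r t ω‖ ∂P ≤ σ * (etaIGT t)^((1:ℝ)/2)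
      + 8*L*(gammaIGT γ₀ t)^2/(etaIGT t)^2 + 2*Δ/(etaIGT t)
      + 4*Δ'*(gammaIGT γ₀ t)/(etaIGT t) := by
    intro t
    induction t with
    | zero =>
      have hr0 : (fun ω => ‖r 0 ω‖) = fun ω => ‖ehat 0 ω‖ := by
        funext ω
        show ‖ehat 0 ω - (0 : EuclideanSpace ℝ (Fin d))‖ = _
        rw [sub_zero]
      rw [hr0, Stmt14.etaIGT_zero]
      simp only [Real.one_rpow, one_pow, div_one, mul_one]
      have hγ0 : (0:ℝ) ≤ gammaIGT γ₀ 0 := (Stmt14.gammaIGT_pos hγ₀ 0).le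
      nlinarith [h0, mul_nonneg hL (sq_nonneg (gammaIGT γ₀ 0)), mul_nonneg hΔ' hγ0]
    | succ n ih =>
      have hη : 0 < etaIGT (n+1) := Stmt14.etaIGT_pos (n+1)
      have hη1 : etaIGT (n+1) ≤ 1 := Stmt14.etaIGT_le_one (n+1)
      have step := hrbnd n
      have i2 := Stmt14.ineq2 n
      have i3 := Stmt14.ineq3 n
      have i4 := Stmt14.ineq4 n γ₀ hγ₀
      have i5 := Stmt14.ineq5 n γ₀ hγ₀
      have hIH : (1 - etaIGT (n+1)) * (∫ ω, ‖r n ω‖ ∂P)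
          ≤ (1 - etaIGT (n+1)) * (σ * (etaIGT n)^((1:ℝ)/2)
            + 8*L*(gammaIGT γ₀ n)^2/(etaIGT n)^2 + 2*Δ/(etaIGT n)
            + 4*Δ'*(gammaIGT γ₀ n)/(etaIGT n)) :=
        mul_le_mul_of_nonneg_left ih (by linarith)
      have hσ2 := mul_le_mul_of_nonneg_left i2 hσ
      have hL5 := mul_le_mul_of_nonneg_left i5 hL
      have hΔ3 := mul_le_mul_of_nonneg_left i3 hΔ
      have hΔ'4 := mul_le_mul_of_nonneg_left i4 hΔ'
      calc ∫ ω, ‖r (n+1) ω‖ ∂P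
          ≤ (1 - etaIGT (n+1)) * (∫ ω, ‖r n ω‖ ∂P)
            + (2*L*(gammaIGT γ₀ n)^2 / etaIGT (n+1) + 2*Δ + 2*Δ'*(gammaIGT γ₀ n)) := step
      _ ≤ (1 - etaIGT (n+1)) * (σ * (etaIGT n)^((1:ℝ)/2)
            + 8*L*(gammaIGT γ₀ n)^2/(etaIGT n)^2 + 2*Δ/(etaIGT n)
            + 4*Δ'*(gammaIGT γ₀ n)/(etaIGT n))
            + (2*L*(gammaIGT γ₀ n)^2 / etaIGT (n+1) + 2*Δ + 2*Δ'*(gammaIGT γ₀ n)) := by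
          linarith [hIH]
      _ = σ * ((1 - etaIGT (n+1)) * (etaIGT n)^((1:ℝ)/2))
            + L * (8*(1 - etaIGT (n+1)) * (gammaIGT γ₀ n)^2 / (etaIGT n)^2
              + 2 * (gammaIGT γ₀ n)^2 / etaIGT (n+1))
            + Δ * (2*(1 - etaIGT (n+1)) / etaIGT n + 2)
            + Δ' * (4*(1 - etaIGT (n+1)) * gammaIGT γ₀ n / etaIGT n
              + 2 * gammaIGT γ₀ n) := by
          ring
      _ ≤ σ * ((etaIGT (n+1))^((1:ℝ)/2))
            + L * (8 * (gammaIGT γ₀ (n+1))^2 / (etaIGT (n+1))^2)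
            + Δ * (2 / etaIGT (n+1))
            + Δ' * (4 * gammaIGT γ₀ (n+1) / etaIGT (n+1)) :=
          add_le_add (add_le_add (add_le_add hσ2 hL5) hΔ3) hΔ'4
      _ = σ * (etaIGT (n+1))^((1:ℝ)/2)
            + 8*L*(gammaIGT γ₀ (n+1))^2/(etaIGT (n+1))^2 + 2*Δ/(etaIGT (n+1))
            + 4*Δ'*(gammaIGT γ₀ (n+1))/(etaIGT (n+1)) := by
          ring
  -- conclusion
  intro T hT
  have hsT : ((etaIGT T)^((1:ℝ)/2))^(2:ℕ) = etaIGT T := by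
    rw [← Real.rpow_natCast ((etaIGT T)^((1:ℝ)/2)) 2,
      ← Real.rpow_mul (Stmt14.etaIGT_pos T).le]
    norm_num
  have hunorm : ∫ ω, ‖u T ω‖ ∂P ≤ 2*σ*(etaIGT T)^((1:ℝ)/2) := by
    have hnn : 0 ≤ ∫ ω, ‖u T ω‖ ∂P := integral_nonneg (fun ω => norm_nonneg _)
    have hsp : (0:ℝ) < (etaIGT T)^((1:ℝ)/2) := Real.rpow_pos_of_pos (Stmt14.etaIGT_pos T) _
    refine le_of_pow_le_pow_left₀ (n := 2) two_ne_zero (by positivity) ?_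
    calc (∫ ω, ‖u T ω‖ ∂P)^2 ≤ ∫ ω, ‖u T ω‖^2 ∂P := sq_integral_norm_le (hu2 T)
    _ ≤ 2 * σ^2 * etaIGT T := husq T
    _ ≤ (2*σ*(etaIGT T)^((1:ℝ)/2))^2 := by
        rw [mul_pow, mul_pow, hsT]
        nlinarith [sq_nonneg σ, (Stmt14.etaIGT_pos T).le]
  have htri : ∫ ω, ‖ehat T ω‖ ∂P ≤ (∫ ω, ‖u T ω‖ ∂P) + ∫ ω, ‖r T ω‖ ∂P := by
    have hptw : ∀ ω, ‖ehat T ω‖ ≤ ‖u T ω‖ + ‖r T ω‖ := by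
      intro ω
      have heq : ehat T ω = u T ω + r T ω := by
        show _ = u T ω + (ehat T ω - u T ω)
        abel
      rw [heq]
      exact norm_add_le _ _
    have ha : ∫ ω, ‖ehat T ω‖ ∂P ≤ ∫ ω, (‖u T ω‖ + ‖r T ω‖) ∂P :=
      integral_mono (integrable_norm_of_memL2 (hehat2 T))
        ((integrable_norm_of_memL2 (hu2 T)).add (integrable_norm_of_memL2 (hr2 T))) hptw
    have hb : ∫ ω, (‖u T ω‖ + ‖r T ω‖) ∂P = (∫ ω, ‖u T ω‖ ∂P) + ∫ ω, ‖r T ω‖ ∂P :=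
      integral_add (integrable_norm_of_memL2 (hu2 T)) (integrable_norm_of_memL2 (hr2 T))
    rw [hb] at ha
    exact ha
  have hmT := hmain T
  have he1 : 8*L*(gammaIGT γ₀ T)^2/(etaIGT T)^2 = 8*L*(gammaIGT γ₀ T)^2*((etaIGT T)^2)⁻¹ :=
    div_eq_mul_inv _ _
  have he2' : 2*Δ/(etaIGT T) = 2*Δ*(etaIGT T)⁻¹ := div_eq_mul_inv _ _
  have he3 : 4*Δ'*(gammaIGT γ₀ T)/(etaIGT T) = 4*Δ'*(gammaIGT γ₀ T)*(etaIGT T)⁻¹ :=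
    div_eq_mul_inv _ _
  rw [he1, he2', he3] at hmT
  linarith
end
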